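/- arXiv:1707.09115 — 4 statements merged into one kernel-verified Lean document; each statement's English description precedes it below -/
import Mathlib

section
/- Let n ≥ 5, let p > 3 be a prime, and suppose v_p(n) = a with a ≥ 1. Then the Sylow p-subgroup of the critical group K(KG(n,2)) is isomorphic to (ℤ/p^aℤ)^{n−2}; equivalently, the p-elementary divisor multiplicities of the Laplacian L of KG(n,2) are e_a = f−1 = n−2, e_0 = g+1 = n(n−3)/2 + 1, and e_i = 0 for all other i ≥ 1, where e_i denotes the multiplicity of p^i among the Smith normal form entries of L. -/
/-- Vertices of the Kneser graph `KG(n,2)`: the 2-element subsets of an `n`-element set. -/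
abbrev KneserVertex (n : ℕ) := {s : Finset (Fin n) // s.card = 2}

/-- The Kneser graph `KG(n,2)`: 2-subsets are adjacent iff they are disjoint. -/
def kneserGraph2 (n : ℕ) : SimpleGraph (KneserVertex n) where
  Adj u v := Disjoint u.1 v.1
  symm := ⟨fun _ _ h => h.symm⟩
  loopless := ⟨fun u h => by
    simp only [disjoint_self, Finset.bot_eq_empty] at h
    have hu := u.2
    rw [h] at hu
    simp at hu⟩

instance (n : ℕ) : DecidableRel (kneserGraph2 n).Adj :=
  fun u v => inferInstanceAs (Decidable (Disjoint u.1 v.1))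

/-- The Laplacian matrix of `KG(n,2)` over the integers. -/
noncomputable def kneserLaplacian (n : ℕ) : Matrix (KneserVertex n) (KneserVertex n) ℤ :=
  SimpleGraph.lapMatrix ℤ (kneserGraph2 n)

/-- The cokernel `ℤ^V / im L` of the Laplacian of `KG(n,2)`. -/
noncomputable abbrev KneserCokernel (n : ℕ) :=
  (KneserVertex n → ℤ) ⧸ LinearMap.range (Matrix.mulVecLin (kneserLaplacian n))

/-- The critical group of `KG(n,2)`: the torsion subgroup of the cokernel of the Laplacian. -/
noncomputable def criticalGroup (n : ℕ) : AddSubgroup (KneserCokernel n) :=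
  AddCommGroup.torsion (KneserCokernel n)

namespace KneserAux

open Finset Matrix

/-- Half of `n(n-3)`. -/
def lamZ (n : ℕ) : ℤ := ((n : ℤ) * ((n : ℤ) - 3)) / 2

/-- Half of `(n-1)(n-4)`. -/
def muZ (n : ℕ) : ℤ := (((n : ℤ) - 1) * ((n : ℤ) - 4)) / 2

lemma two_dvd_lam_num (n : ℕ) : (2 : ℤ) ∣ (n : ℤ) * ((n : ℤ) - 3) := by
  rcases Int.even_or_odd (n : ℤ) with ⟨k, hk⟩ | ⟨k, hk⟩
  · exact ⟨k * ((n : ℤ) - 3), by rw [hk]; ring⟩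
  · exact ⟨(n : ℤ) * (k - 1), by rw [hk]; ring⟩

lemma two_dvd_mu_num (n : ℕ) : (2 : ℤ) ∣ ((n : ℤ) - 1) * ((n : ℤ) - 4) := by
  rcases Int.even_or_odd (n : ℤ) with ⟨k, hk⟩ | ⟨k, hk⟩
  · exact ⟨((n : ℤ) - 1) * (k - 2), by rw [hk]; ring⟩
  · exact ⟨k * ((n : ℤ) - 4), by rw [hk]; ring⟩

lemma two_lam (n : ℕ) : 2 * lamZ n = (n : ℤ) * ((n : ℤ) - 3) :=
  Int.mul_ediv_cancel' (two_dvd_lam_num n)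

lemma two_mu (n : ℕ) : 2 * muZ n = ((n : ℤ) - 1) * ((n : ℤ) - 4) :=
  Int.mul_ediv_cancel' (two_dvd_mu_num n)

lemma lam_eq_mu_add (n : ℕ) : lamZ n = muZ n + ((n : ℤ) - 2) := by
  have h1 := two_lam n
  have h2 := two_mu n
  have : 2 * lamZ n = 2 * (muZ n + ((n : ℤ) - 2)) := by linear_combination h1 - h2
  exact mul_left_cancel₀ (by norm_num) this

/-- The vertex-element incidence matrix. -/
def Bm (n : ℕ) : Matrix (KneserVertex n) (Fin n) ℤ :=
  Matrix.of fun s i => if i ∈ s.1 then 1 else 0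

/-- `B *ᵥ x`. -/
def Bv (n : ℕ) (x : Fin n → ℤ) : KneserVertex n → ℤ := fun s => ∑ i, Bm n s i * x i

/-- `Bᵀ *ᵥ v`. -/
def Btv (n : ℕ) (v : KneserVertex n → ℤ) : Fin n → ℤ := fun i => ∑ s, Bm n s i * v s

lemma sum_B_row (n : ℕ) (s : KneserVertex n) : ∑ i, Bm n s i = 2 := by
  have : ∑ i, Bm n s i = ((Finset.univ.filter (fun i => i ∈ s.1)).card : ℤ) := by
    simp only [Bm, Matrix.of_apply]
    rw [Finset.sum_boole]
  rw [this, Finset.filter_mem_eq_inter, Finset.univ_inter, s.2]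
  norm_num

lemma mem_two_rep {n : ℕ} (s : KneserVertex n) {i : Fin n} (hi : i ∈ s.1) :
    ∃ j, j ≠ i ∧ s.1 = {i, j} := by
  obtain ⟨x, y, hxy, hs⟩ := Finset.card_eq_two.mp s.2
  rw [hs] at hi
  rcases Finset.mem_insert.mp hi with h | h
  · subst h; exact ⟨y, fun hyi => hxy hyi.symm, hs⟩
  · rw [Finset.mem_singleton] at h; subst h
    exact ⟨x, fun h => hxy (by rw [h]), by rw [hs, Finset.pair_comm]⟩

lemma sum_indicator_pair (n : ℕ) (i j : Fin n) (hij : i ≠ j) :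
    ∑ s : KneserVertex n, (if s.1 = {i, j} then (1 : ℤ) else 0) = 1 := by
  have hcard : ({i, j} : Finset (Fin n)).card = 2 := Finset.card_pair hij
  have : ∀ s : KneserVertex n, (if s.1 = {i, j} then (1 : ℤ) else 0)
      = if s = (⟨{i, j}, hcard⟩ : KneserVertex n) then 1 else 0 := by
    intro s
    congr 1
    simp [Subtype.ext_iff]
  rw [Finset.sum_congr rfl fun s _ => this s, Finset.sum_ite_eq']
  simp

lemma B_indicator (n : ℕ) (i : Fin n) (s : KneserVertex n) :
    Bm n s i = ∑ j ∈ Finset.univ.erase i, (if s.1 = {i, j} then (1 : ℤ) else 0) := by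
  by_cases hi : i ∈ s.1
  · obtain ⟨j₀, hj₀i, hrep⟩ := mem_two_rep s hi
    have : ∀ j ∈ Finset.univ.erase i, (if s.1 = {i, j} then (1 : ℤ) else 0)
        = if j = j₀ then 1 else 0 := by
      intro j hj
      have hji : j ≠ i := Finset.ne_of_mem_erase hj
      refine if_congr ⟨?_, ?_⟩ rfl rfl
      · intro h
        have : j ∈ s.1 := by rw [h]; simp
        rw [hrep] at this
        rcases Finset.mem_insert.mp this with h' | h'
        · exact absurd h' hji
        · exact Finset.mem_singleton.mp h'
      · intro h; rw [h, ← hrep]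
    rw [Finset.sum_congr rfl this, Finset.sum_ite_eq']
    have : j₀ ∈ Finset.univ.erase i := Finset.mem_erase.mpr ⟨hj₀i, Finset.mem_univ _⟩
    rw [if_pos this]
    simp [Bm, hi]
  · have : ∀ j ∈ Finset.univ.erase i, (if s.1 = {i, j} then (1 : ℤ) else 0) = 0 := by
      intro j _
      rw [if_neg]
      intro h
      exact hi (by rw [h]; simp)
    rw [Finset.sum_congr rfl this]
    simp [Bm, hi]

lemma sum_B_col (n : ℕ) (i : Fin n) : ∑ s : KneserVertex n, Bm n s i = (n : ℤ) - 1 := by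
  have h1 : ∑ s : KneserVertex n, Bm n s i
      = ∑ s : KneserVertex n, ∑ j ∈ Finset.univ.erase i, (if s.1 = {i, j} then (1 : ℤ) else 0) :=
    Finset.sum_congr rfl fun s _ => B_indicator n i s
  rw [h1, Finset.sum_comm]
  have h2 : ∀ j ∈ Finset.univ.erase i,
      (∑ s : KneserVertex n, (if s.1 = {i, j} then (1 : ℤ) else 0)) = 1 := by
    intro j hj
    exact sum_indicator_pair n i j (Finset.ne_of_mem_erase hj).symm
  rw [Finset.sum_congr rfl h2, Finset.sum_const, Finset.card_erase_of_mem (Finset.mem_univ i)]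
  have hn1 : 1 ≤ n := i.pos
  simp only [Finset.card_univ, Fintype.card_fin, nsmul_eq_mul, mul_one]
  push_cast [Nat.cast_sub hn1]
  ring

lemma sum_B_gram (n : ℕ) (i j : Fin n) :
    ∑ s : KneserVertex n, Bm n s i * Bm n s j = if i = j then (n : ℤ) - 1 else 1 := by
  by_cases hij : i = j
  · subst hij
    rw [if_pos rfl, ← sum_B_col n i]
    refine Finset.sum_congr rfl fun s _ => ?_
    simp only [Bm, Matrix.of_apply]
    split_ifs <;> ring
  · rw [if_neg hij, ← sum_indicator_pair n i j hij]
    refine Finset.sum_congr rfl fun s _ => ?_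
    simp only [Bm, Matrix.of_apply]
    by_cases h : s.1 = {i, j}
    · rw [if_pos h, if_pos (show i ∈ s.1 by rw [h]; simp),
        if_pos (show j ∈ s.1 by rw [h]; simp)]
      norm_num
    · rw [if_neg h]
      by_cases h1 : i ∈ s.1
      · by_cases h2 : j ∈ s.1
        · exfalso
          apply h
          refine (Finset.eq_of_subset_of_card_le ?_ ?_).symm
          · intro x hx
            rcases Finset.mem_insert.mp hx with h' | h'
            · exact h' ▸ h1
            · exact (Finset.mem_singleton.mp h') ▸ h2
          · rw [s.2, Finset.card_pair hij]
        · rw [if_neg h2]; ring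
      · rw [if_neg h1]; ring

lemma card_V (n : ℕ) (hn : 5 ≤ n) :
    2 * ((Fintype.card (KneserVertex n) : ℤ)) = (n : ℤ) * ((n : ℤ) - 1) := by
  have h := Fintype.card_finset_len (α := Fin n) 2
  have hcard : Fintype.card (KneserVertex n) = Nat.choose n 2 := by
    rw [h, Fintype.card_fin]
  have hch : 2 * Nat.choose n 2 = n * (n - 1) := by
    have hev : 2 ∣ n * (n - 1) := by
      have : n * (n - 1) = (n - 1) * ((n - 1) + 1) := by
        have : (n - 1) + 1 = n := by omega
        rw [this]; ring
      rw [this]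
      exact (Nat.even_mul_succ_self (n - 1)).two_dvd
    rw [Nat.choose_two_right, Nat.mul_div_cancel' hev]
  rw [hcard]
  have := congrArg (fun m : ℕ => (m : ℤ)) hch
  push_cast [Nat.cast_sub (by omega : 1 ≤ n)] at this
  linarith

lemma inter_card (n : ℕ) (s t : KneserVertex n) :
    ∑ i, Bm n s i * Bm n t i = ((s.1 ∩ t.1).card : ℤ) := by
  have h1 : ∀ i : Fin n, Bm n s i * Bm n t i = if i ∈ s.1 ∩ t.1 then 1 else 0 := by
    intro i
    simp only [Bm, Matrix.of_apply, Finset.mem_inter]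
    split_ifs with h1 h2 h3 <;> simp_all
  rw [Finset.sum_congr rfl fun i _ => h1 i, Finset.sum_boole,
    Finset.filter_mem_eq_inter, Finset.univ_inter]

lemma adj_off (n : ℕ) {s t : KneserVertex n} (hst : s ≠ t) :
    (if (kneserGraph2 n).Adj s t then (1 : ℤ) else 0) = 1 - ((s.1 ∩ t.1).card : ℤ) := by
  by_cases h : (kneserGraph2 n).Adj s t
  · rw [if_pos h]
    have : s.1 ∩ t.1 = ∅ := Finset.disjoint_iff_inter_eq_empty.mp h
    rw [this]
    simp
  · rw [if_neg h]
    have hne : (s.1 ∩ t.1).Nonempty := Finset.not_disjoint_iff_nonempty_inter.mp h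
    have h1 : 1 ≤ (s.1 ∩ t.1).card := Finset.card_pos.mpr hne
    have h2 : (s.1 ∩ t.1).card ≤ 2 := by
      calc (s.1 ∩ t.1).card ≤ s.1.card := Finset.card_le_card Finset.inter_subset_left
        _ = 2 := s.2
    have h3 : (s.1 ∩ t.1).card ≠ 2 := by
      intro hc
      have hsub : s.1 ∩ t.1 = s.1 :=
        Finset.eq_of_subset_of_card_le Finset.inter_subset_left (by rw [hc, s.2])
      have hsub2 : s.1 ⊆ t.1 := by rw [← hsub]; exact Finset.inter_subset_right
      have : s.1 = t.1 := Finset.eq_of_subset_of_card_le hsub2 (by rw [s.2, t.2])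
      exact hst (Subtype.ext this)
    have : (s.1 ∩ t.1).card = 1 := by omega
    rw [this]
    norm_num

lemma sum_inter_card (n : ℕ) (s : KneserVertex n) :
    ∑ t : KneserVertex n, ((s.1 ∩ t.1).card : ℤ) = 2 * ((n : ℤ) - 1) := by
  have h1 : ∀ t : KneserVertex n, ((s.1 ∩ t.1).card : ℤ) = ∑ i, Bm n s i * Bm n t i :=
    fun t => (inter_card n s t).symm
  rw [Finset.sum_congr rfl fun t _ => h1 t, Finset.sum_comm]
  have h2 : ∀ i : Fin n, (∑ t : KneserVertex n, Bm n s i * Bm n t i) = Bm n s i * ((n : ℤ) - 1) := by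
    intro i
    rw [← Finset.mul_sum, sum_B_col]
  rw [Finset.sum_congr rfl fun i _ => h2 i, ← Finset.sum_mul, sum_B_row]

lemma degree_eq (n : ℕ) (hn : 5 ≤ n) (s : KneserVertex n) :
    (((kneserGraph2 n).degree s : ℤ)) = muZ n + 1 := by
  have hdeg : ((kneserGraph2 n).degree s : ℤ)
      = ∑ t : KneserVertex n, (if (kneserGraph2 n).Adj s t then (1 : ℤ) else 0) := by
    rw [SimpleGraph.degree, SimpleGraph.neighborFinset_eq_filter, ← Finset.sum_boole]
  have hsplit : ∑ t : KneserVertex n, (if (kneserGraph2 n).Adj s t then (1 : ℤ) else 0)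
      = ∑ t ∈ Finset.univ.erase s, (if (kneserGraph2 n).Adj s t then (1 : ℤ) else 0) := by
    rw [← Finset.add_sum_erase Finset.univ _ (Finset.mem_univ s)]
    simp [SimpleGraph.irrefl]
  have hoff : ∑ t ∈ Finset.univ.erase s, (if (kneserGraph2 n).Adj s t then (1 : ℤ) else 0)
      = ∑ t ∈ Finset.univ.erase s, (1 - ((s.1 ∩ t.1).card : ℤ)) := by
    refine Finset.sum_congr rfl fun t ht => ?_
    exact adj_off n (Finset.ne_of_mem_erase ht).symm
  have hsum : ∑ t ∈ Finset.univ.erase s, (1 - ((s.1 ∩ t.1).card : ℤ))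
      = ((Fintype.card (KneserVertex n) : ℤ) - 1)
        - (∑ t : KneserVertex n, ((s.1 ∩ t.1).card : ℤ)) + ((s.1 ∩ s.1).card : ℤ) := by
    rw [Finset.sum_sub_distrib, Finset.sum_const, Finset.card_erase_of_mem (Finset.mem_univ s),
      ← Finset.add_sum_erase Finset.univ (fun t : KneserVertex n => ((s.1 ∩ t.1).card : ℤ))
        (Finset.mem_univ s)]
    have hcge : 1 ≤ Fintype.card (KneserVertex n) := Fintype.card_pos_iff.mpr ⟨s⟩
    rw [Finset.card_univ]
    simp only [nsmul_eq_mul, mul_one, Nat.cast_sub hcge, Nat.cast_one]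
    ring
  rw [hdeg, hsplit, hoff, hsum, sum_inter_card, Finset.inter_self, s.2]
  have hc := card_V n hn
  have hm := two_mu n
  push_cast
  linarith [hc, hm]

lemma lap_entry (n : ℕ) (hn : 5 ≤ n) (s t : KneserVertex n) :
    kneserLaplacian n s t
      = muZ n * (if s = t then 1 else 0) + (∑ i, Bm n s i * Bm n t i) - 1 := by
  rw [kneserLaplacian, SimpleGraph.lapMatrix, Matrix.sub_apply, SimpleGraph.degMatrix,
    SimpleGraph.adjMatrix_apply, inter_card]
  by_cases hst : s = t
  · subst hst
    rw [Matrix.diagonal_apply_eq, if_pos rfl, Finset.inter_self, s.2,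
      if_neg (SimpleGraph.irrefl _), degree_eq n hn s]
    ring
  · rw [Matrix.diagonal_apply_ne _ hst, if_neg hst, adj_off n hst]
    ring

lemma lap_mulVec (n : ℕ) (hn : 5 ≤ n) (v : KneserVertex n → ℤ) (s : KneserVertex n) :
    (kneserLaplacian n *ᵥ v) s
      = muZ n * v s + (∑ i, Bm n s i * Btv n v i) - ∑ t, v t := by
  have h0 : (kneserLaplacian n *ᵥ v) s = ∑ t, kneserLaplacian n s t * v t := by
    simp [Matrix.mulVec, dotProduct]
  rw [h0, Finset.sum_congr rfl fun t (_ : t ∈ Finset.univ) => by rw [lap_entry n hn s t]]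
  have h1 : ∀ t : KneserVertex n,
      (muZ n * (if s = t then 1 else 0) + (∑ i, Bm n s i * Bm n t i) - 1) * v t
      = muZ n * ((if s = t then 1 else 0) * v t) + (∑ i, Bm n s i * (Bm n t i * v t)) - v t := by
    intro t
    rw [sub_mul, add_mul, Finset.sum_mul]
    simp only [mul_assoc, one_mul]
  rw [Finset.sum_congr rfl fun t _ => h1 t, Finset.sum_sub_distrib, Finset.sum_add_distrib,
    ← Finset.mul_sum]
  congr 2
  · congr 1
    simp
  · rw [Finset.sum_comm]
    exact Finset.sum_congr rfl fun i _ => by rw [← Finset.mul_sum]; rfl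

lemma sum_Bv (n : ℕ) (x : Fin n → ℤ) :
    ∑ s, Bv n x s = ((n : ℤ) - 1) * ∑ i, x i := by
  unfold Bv
  rw [Finset.sum_comm, Finset.mul_sum]
  refine Finset.sum_congr rfl fun i _ => ?_
  rw [← Finset.sum_mul, sum_B_col]

lemma sum_Btv (n : ℕ) (v : KneserVertex n → ℤ) :
    ∑ i, Btv n v i = 2 * ∑ s, v s := by
  unfold Btv
  rw [Finset.sum_comm, Finset.mul_sum]
  refine Finset.sum_congr rfl fun s _ => ?_
  rw [← Finset.sum_mul, sum_B_row]

lemma Btv_Bv (n : ℕ) (x : Fin n → ℤ) (i : Fin n) :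
    Btv n (Bv n x) i = ((n : ℤ) - 2) * x i + ∑ j, x j := by
  unfold Btv Bv
  have h1 : ∀ s : KneserVertex n, Bm n s i * ∑ j, Bm n s j * x j
      = ∑ j, Bm n s i * Bm n s j * x j := by
    intro s
    rw [Finset.mul_sum]
    exact Finset.sum_congr rfl fun j _ => by ring
  rw [Finset.sum_congr rfl fun s _ => h1 s, Finset.sum_comm]
  have h2 : ∀ j : Fin n, (∑ s : KneserVertex n, Bm n s i * Bm n s j * x j)
      = (if i = j then (n : ℤ) - 1 else 1) * x j := by
    intro j
    rw [← Finset.sum_mul, sum_B_gram]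
  rw [Finset.sum_congr rfl fun j _ => h2 j]
  have h3 : ∀ j : Fin n, (if i = j then (n : ℤ) - 1 else 1) * x j
      = x j + (if i = j then ((n : ℤ) - 2) * x j else 0) := by
    intro j
    split_ifs <;> ring
  rw [Finset.sum_congr rfl fun j _ => h3 j, Finset.sum_add_distrib, Finset.sum_ite_eq]
  simp [add_comm]

lemma dot_Bv_Bv (n : ℕ) (x y : Fin n → ℤ) :
    ∑ s, Bv n x s * Bv n y s
      = ((n : ℤ) - 2) * (∑ j, x j * y j) + (∑ j, x j) * (∑ j, y j) := by
  have h1 : ∀ s : KneserVertex n, Bv n x s * Bv n y s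
      = ∑ i, x i * (Bm n s i * Bv n y s) := by
    intro s
    show (∑ i, Bm n s i * x i) * Bv n y s = _
    rw [Finset.sum_mul]
    exact Finset.sum_congr rfl fun i _ => by ring
  rw [Finset.sum_congr rfl fun s _ => h1 s, Finset.sum_comm]
  have h2 : ∀ i : Fin n, (∑ s : KneserVertex n, x i * (Bm n s i * Bv n y s))
      = x i * (((n : ℤ) - 2) * y i + ∑ j, y j) := by
    intro i
    rw [← Finset.mul_sum, ← Btv_Bv n y i]
    rfl
  rw [Finset.sum_congr rfl fun i _ => h2 i]
  have h3 : ∀ i : Fin n, x i * (((n : ℤ) - 2) * y i + ∑ j, y j)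
      = ((n : ℤ) - 2) * (x i * y i) + x i * (∑ j, y j) := by
    intro i; ring
  rw [Finset.sum_congr rfl fun i _ => h3 i, Finset.sum_add_distrib, ← Finset.mul_sum,
    ← Finset.sum_mul]

lemma lap_Bv (n : ℕ) (hn : 5 ≤ n) (x : Fin n → ℤ) :
    kneserLaplacian n *ᵥ Bv n x
      = fun s => lamZ n * Bv n x s - ((n : ℤ) - 3) * (∑ i, x i) := by
  funext s
  rw [lap_mulVec n hn (Bv n x) s]
  have h1 : ∀ i : Fin n, Bm n s i * Btv n (Bv n x) i
      = ((n : ℤ) - 2) * (Bm n s i * x i) + Bm n s i * (∑ j, x j) := by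
    intro i
    rw [Btv_Bv]
    ring
  rw [Finset.sum_congr rfl fun i _ => h1 i, Finset.sum_add_distrib, ← Finset.mul_sum,
    ← Finset.sum_mul, sum_B_row, sum_Bv]
  have : lamZ n = muZ n + ((n : ℤ) - 2) := lam_eq_mu_add n
  rw [this]
  show muZ n * Bv n x s + (((n : ℤ) - 2) * Bv n x s + 2 * ∑ j, x j) - ((n : ℤ) - 1) * ∑ i, x i = _
  ring

lemma sum_lap_mulVec (n : ℕ) (hn : 5 ≤ n) (v : KneserVertex n → ℤ) :
    ∑ s, (kneserLaplacian n *ᵥ v) s = 0 := by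
  rw [Finset.sum_congr rfl fun s (_ : s ∈ Finset.univ) => lap_mulVec n hn v s]
  rw [Finset.sum_sub_distrib, Finset.sum_add_distrib, ← Finset.mul_sum, Finset.sum_comm,
    Finset.sum_const, Finset.card_univ]
  have h1 : ∀ i : Fin n, (∑ s : KneserVertex n, Bm n s i * Btv n v i)
      = ((n : ℤ) - 1) * Btv n v i := by
    intro i
    rw [← Finset.sum_mul, sum_B_col]
  rw [Finset.sum_congr rfl fun i _ => h1 i, ← Finset.mul_sum, sum_Btv, nsmul_eq_mul]
  have hc := card_V n hn
  have hm := two_mu n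
  set S := ∑ s : KneserVertex n, v s with hS
  have key : 2 * (muZ n * S + ((n : ℤ) - 1) * (2 * S)
      - (Fintype.card (KneserVertex n) : ℤ) * S) = 0 := by
    linear_combination S * hm - S * hc
  linarith

/-- The range of the Laplacian, as a submodule. -/
noncomputable abbrev Rn (n : ℕ) : Submodule ℤ (KneserVertex n → ℤ) :=
  LinearMap.range (Matrix.mulVecLin (kneserLaplacian n))

lemma lap_mem (n : ℕ) (z : KneserVertex n → ℤ) : kneserLaplacian n *ᵥ z ∈ Rn n :=
  ⟨z, by rw [Matrix.mulVecLin_apply]⟩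

lemma mem_Rn {n : ℕ} {v : KneserVertex n → ℤ} (h : v ∈ Rn n) :
    ∃ z, kneserLaplacian n *ᵥ z = v := by
  obtain ⟨z, hz⟩ := h
  exact ⟨z, by rw [← Matrix.mulVecLin_apply]; exact hz⟩

lemma lamBv_mem (n : ℕ) (hn : 5 ≤ n) (x : Fin n → ℤ) (hx : ∑ i, x i = 0) :
    lamZ n • Bv n x ∈ Rn n := by
  refine ⟨Bv n x, ?_⟩
  rw [Matrix.mulVecLin_apply, lap_Bv n hn x, hx]
  funext s
  simp [mul_comm]

/-- first `n-2` coordinates, embedded -/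
def lo (n : ℕ) (i : Fin (n - 2)) : Fin n := Fin.castLE (Nat.sub_le n 2) i

/-- the base coordinate `n-1` -/
def bb (n : ℕ) (hn : 5 ≤ n) : Fin n := ⟨n - 1, by omega⟩

/-- the special coordinate `n-2` -/
def exc (n : ℕ) (hn : 5 ≤ n) : Fin n := ⟨n - 2, by omega⟩

lemma lo_ne_bb (n : ℕ) (hn : 5 ≤ n) (i : Fin (n - 2)) : lo n i ≠ bb n hn := by
  intro h
  have h' := congrArg Fin.val h
  have hi := i.2
  simp only [lo, bb, Fin.coe_castLE] at h'
  omega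

lemma lo_ne_exc (n : ℕ) (hn : 5 ≤ n) (i : Fin (n - 2)) : lo n i ≠ exc n hn := by
  intro h
  have h' := congrArg Fin.val h
  have hi := i.2
  simp only [lo, exc, Fin.coe_castLE] at h'
  omega

lemma exc_ne_bb (n : ℕ) (hn : 5 ≤ n) : exc n hn ≠ bb n hn := by
  intro h
  have h' := congrArg Fin.val h
  simp only [exc, bb] at h'
  omega

/-- test vectors `e_i - e_(n-1)` -/
def xvec (n : ℕ) (hn : 5 ≤ n) (i : Fin (n - 2)) : Fin n → ℤ :=
  fun j => (if j = lo n i then 1 else 0) - (if j = bb n hn then 1 else 0)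

lemma dot_single (n : ℕ) (a b : Fin n) (y : Fin n → ℤ) :
    ∑ j, ((if j = a then (1 : ℤ) else 0) - (if j = b then 1 else 0)) * y j = y a - y b := by
  simp [sub_mul, Finset.sum_sub_distrib, ite_mul, Finset.sum_ite_eq']

lemma dot_xvec (n : ℕ) (hn : 5 ≤ n) (i : Fin (n - 2)) (y : Fin n → ℤ) :
    ∑ j, xvec n hn i j * y j = y (lo n i) - y (bb n hn) := dot_single n _ _ y

lemma sum_xvec (n : ℕ) (hn : 5 ≤ n) (i : Fin (n - 2)) : ∑ j, xvec n hn i j = 0 := by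
  have := dot_xvec n hn i (fun _ => (1 : ℤ))
  simpa using this

lemma dot_lap_comm (n : ℕ) (v w : KneserVertex n → ℤ) :
    ∑ s, v s * (kneserLaplacian n *ᵥ w) s = ∑ s, (kneserLaplacian n *ᵥ v) s * w s := by
  have hsymm : ∀ s t, kneserLaplacian n s t = kneserLaplacian n t s := by
    intro s t
    have h := SimpleGraph.isSymm_lapMatrix (G := kneserGraph2 n) (R := ℤ)
    rw [kneserLaplacian]
    exact Matrix.IsSymm.apply h t s
  have h1 : ∀ s, v s * (kneserLaplacian n *ᵥ w) s = ∑ t, v s * (kneserLaplacian n s t * w t) := by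
    intro s
    show v s * ∑ t, kneserLaplacian n s t * w t = _
    rw [Finset.mul_sum]
  have h2 : ∀ s, (kneserLaplacian n *ᵥ v) s * w s = ∑ t, kneserLaplacian n s t * v t * w s := by
    intro s
    show (∑ t, kneserLaplacian n s t * v t) * w s = _
    rw [Finset.sum_mul]
  rw [Finset.sum_congr rfl fun s _ => h1 s, Finset.sum_congr rfl fun s _ => h2 s,
    Finset.sum_comm]
  refine Finset.sum_congr rfl fun s _ => Finset.sum_congr rfl fun t _ => ?_
  rw [hsymm t s]
  ring

section NT

variable (n p a : ℕ) [Fact p.Prime]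

lemma ppZ : Prime (p : ℤ) := Nat.prime_iff_prime_int.mp Fact.out

lemma pd_n (ha : 1 ≤ a) (hdvd : p ^ a ∣ n) : (p : ℤ) ∣ (n : ℤ) := by
  have h1 : p ∣ n := dvd_trans (dvd_pow_self p (by omega : a ≠ 0)) hdvd
  exact_mod_cast Int.natCast_dvd_natCast.mpr h1

lemma pa_dvd_nZ (hdvd : p ^ a ∣ n) : (p : ℤ)^a ∣ (n : ℤ) := by
  have := Int.natCast_dvd_natCast.mpr hdvd
  push_cast at this
  exact this

lemma p_not_dvd_nsub (hp : 3 < p) (hpn : (p : ℤ) ∣ (n : ℤ)) (k : ℕ) (hk0 : 0 < k) (hk : k ≤ 4) :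
    ¬ (p : ℤ) ∣ ((n : ℤ) - (k : ℤ)) := by
  intro h
  have hdk : (p : ℤ) ∣ ((n : ℤ) - ((n : ℤ) - (k : ℤ))) := dvd_sub hpn h
  rw [sub_sub_cancel] at hdk
  have hle : (p : ℤ) ≤ (k : ℤ) := Int.le_of_dvd (by exact_mod_cast hk0) hdk
  have hpk : p ≤ k := by exact_mod_cast hle
  have hpp : p.Prime := Fact.out
  have : p ≠ 4 := by
    intro h4
    rw [h4] at hpp
    norm_num at hpp
  omega

lemma pa_dvd_lam (hp : 3 < p) (ha : 1 ≤ a) (hdvd : p ^ a ∣ n) : (p : ℤ)^a ∣ lamZ n := by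
  have h1 : (p : ℤ)^a ∣ 2 * lamZ n := by
    rw [two_lam]
    exact Dvd.dvd.mul_right (pa_dvd_nZ n p a hdvd) _
  have hp2 : ¬ (p : ℤ) ∣ 2 := by
    intro h
    have : p ∣ 2 := by exact_mod_cast h
    have := Nat.le_of_dvd (by norm_num) this
    omega
  have hcop : IsCoprime ((p : ℤ)^a) 2 := (((ppZ p).coprime_iff_not_dvd).mpr hp2).pow_left
  exact hcop.dvd_of_dvd_mul_left h1

lemma p_not_dvd_u (hp : 3 < p) (ha : 1 ≤ a) (hdvd : p ^ a ∣ n) (hndvd : ¬ p ^ (a + 1) ∣ n)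
    {u : ℤ} (hu : lamZ n = (p : ℤ)^a * u) : ¬ (p : ℤ) ∣ u := by
  intro h
  have h1 : (p : ℤ)^(a+1) ∣ 2 * lamZ n := by
    rw [hu]
    obtain ⟨c, hc⟩ := h
    exact ⟨2 * c, by rw [hc]; ring⟩
  rw [two_lam] at h1
  have hcop3 : IsCoprime ((p : ℤ)^(a+1)) ((n : ℤ) - 3) :=
    (((ppZ p).coprime_iff_not_dvd).mpr
      (p_not_dvd_nsub n p hp (pd_n n p a ha hdvd) 3 (by norm_num) (by norm_num))).pow_left
  have h2 : (p : ℤ)^(a+1) ∣ (n : ℤ) := hcop3.dvd_of_dvd_mul_right h1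
  apply hndvd
  have : ((p^(a+1) : ℕ) : ℤ) ∣ (n : ℤ) := by push_cast; exact h2
  exact_mod_cast this

lemma p_not_dvd_mu (hp : 3 < p) (ha : 1 ≤ a) (hdvd : p ^ a ∣ n) : ¬ (p : ℤ) ∣ muZ n := by
  intro h
  have h1 : (p : ℤ) ∣ 2 * muZ n := Dvd.dvd.mul_left h 2
  rw [two_mu] at h1
  have hpn := pd_n n p a ha hdvd
  rcases (Prime.dvd_mul (ppZ p)).mp h1 with h2 | h2
  · exact p_not_dvd_nsub n p hp hpn 1 (by norm_num) (by norm_num) (by push_cast; exact h2)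
  · exact p_not_dvd_nsub n p hp hpn 4 (by norm_num) (by norm_num) (by push_cast; exact h2)

lemma inv_cast {m : ℤ} (hm : ¬ (p : ℤ) ∣ m) :
    ∃ α : ℤ, ((α * m : ℤ) : ZMod (p^a)) = 1 := by
  have hcop : IsCoprime ((p : ℤ)^a) m := (((ppZ p).coprime_iff_not_dvd).mpr hm).pow_left
  obtain ⟨α, β, h⟩ := hcop.symm
  refine ⟨α, ?_⟩
  have hcast : (((p : ℤ)^a : ℤ) : ZMod (p^a)) = 0 := by
    have := ZMod.natCast_self (p^a)
    push_cast at this ⊢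
    exact_mod_cast this
  calc ((α * m : ℤ) : ZMod (p^a))
      = ((α * m + β * (p : ℤ)^a : ℤ) : ZMod (p^a)) - (β : ZMod (p^a)) * (((p : ℤ)^a : ℤ) : ZMod (p^a)) := by
        push_cast
        ring
    _ = 1 := by rw [h, hcast]; push_cast; ring

lemma cast_zero_iff_dvd (x : ℤ) : ((x : ZMod (p^a)) = 0) ↔ (p : ℤ)^a ∣ x := by
  rw [ZMod.intCast_zmod_eq_zero_iff_dvd]
  constructor <;> intro h
  · have : ((p^a : ℕ) : ℤ) ∣ x := h
    push_cast at this
    exact this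
  · have : ((p^a : ℕ) : ℤ) ∣ x := by push_cast; exact h
    exact this

lemma cancel_unit {m d : ℤ} (hm : ¬ (p : ℤ) ∣ m) (h : ((m * d : ℤ) : ZMod (p^a)) = 0) :
    ((d : ℤ) : ZMod (p^a)) = 0 := by
  obtain ⟨α, hα⟩ := inv_cast p a hm
  have h1 : ((d : ℤ) : ZMod (p^a)) = ((α * m : ℤ) : ZMod (p^a)) * ((d : ℤ) : ZMod (p^a)) := by
    rw [hα, one_mul]
  rw [h1]
  have h2 : ((α * m : ℤ) : ZMod (p^a)) * ((d : ℤ) : ZMod (p^a))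
      = ((α : ℤ) : ZMod (p^a)) * ((m * d : ℤ) : ZMod (p^a)) := by
    push_cast
    ring
  rw [h2, h, mul_zero]

end NT

lemma mem_of_coprime {n : ℕ} {c d : ℤ} {v : KneserVertex n → ℤ} (hcop : IsCoprime c d)
    (h1 : c • v ∈ Rn n) (h2 : d • v ∈ Rn n) : v ∈ Rn n := by
  obtain ⟨α, β, h⟩ := hcop
  have hv : v = α • (c • v) + β • (d • v) := by
    rw [smul_smul, smul_smul, ← add_smul, h, one_smul]
  rw [hv]
  exact Submodule.add_mem _ (Submodule.smul_mem _ _ h1) (Submodule.smul_mem _ _ h2)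

lemma lap_eq_mu_add_W (n : ℕ) (hn : 5 ≤ n) (v : KneserVertex n → ℤ) (hSv : ∑ s, v s = 0) :
    kneserLaplacian n *ᵥ v = muZ n • v + Bv n (Btv n v) := by
  funext s
  rw [lap_mulVec n hn v s, hSv]
  simp only [Pi.add_apply, Pi.smul_apply, smul_eq_mul, sub_zero]
  rfl

lemma cubic (n : ℕ) (hn : 5 ≤ n) (v : KneserVertex n → ℤ) (hSv : ∑ s, v s = 0) :
    (lamZ n * muZ n) • v
      = kneserLaplacian n *ᵥ ((lamZ n + muZ n) • v - kneserLaplacian n *ᵥ v) := by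
  have hW := lap_eq_mu_add_W n hn v hSv
  have hSB : ∑ j, Btv n v j = 0 := by rw [sum_Btv, hSv, mul_zero]
  have hW2 : kneserLaplacian n *ᵥ Bv n (Btv n v) = lamZ n • Bv n (Btv n v) := by
    rw [lap_Bv n hn, hSB]
    funext s
    simp [mul_comm]
  rw [Matrix.mulVec_sub, Matrix.mulVec_smul, hW, Matrix.mulVec_add, Matrix.mulVec_smul, hW2, hW]
  module

lemma torsion_rep_sum (n : ℕ) (hn : 5 ≤ n) (v : KneserVertex n → ℤ)
    (h : IsOfFinAddOrder (Submodule.Quotient.mk v : KneserCokernel n)) : ∑ s, v s = 0 := by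
  set m := addOrderOf (Submodule.Quotient.mk v : KneserCokernel n) with hm
  have hmpos : 0 < m := h.addOrderOf_pos
  have hmz : m • (Submodule.Quotient.mk v : KneserCokernel n) = 0 := addOrderOf_nsmul_eq_zero _
  have hmem : (m : ℤ) • v ∈ Rn n := by
    rw [← Submodule.Quotient.mk_eq_zero, Submodule.Quotient.mk_smul]
    rw [natCast_zsmul]
    exact hmz
  obtain ⟨z, hz⟩ := mem_Rn hmem
  have hs := sum_lap_mulVec n hn z
  rw [hz] at hs
  have hs2 : (m : ℤ) * ∑ s, v s = 0 := by
    rw [Finset.mul_sum]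
    rw [← hs]
    exact Finset.sum_congr rfl fun s _ => by simp
  rcases mul_eq_zero.mp hs2 with h' | h'
  · exfalso
    have : (m : ℤ) ≠ 0 := by exact_mod_cast hmpos.ne'
    exact this h'
  · exact h'

lemma torsion_killed (n : ℕ) (hn : 5 ≤ n) (g : KneserCokernel n) (hg : IsOfFinAddOrder g) :
    (lamZ n * muZ n) • g = 0 := by
  obtain ⟨v, rfl⟩ := Submodule.Quotient.mk_surjective _ g
  have hSv := torsion_rep_sum n hn v hg
  rw [← Submodule.Quotient.mk_smul, Submodule.Quotient.mk_eq_zero, cubic n hn v hSv]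
  exact lap_mem n _

lemma master (n p a : ℕ) [Fact p.Prime] (hn : 5 ≤ n) (hp : 3 < p) (ha : 1 ≤ a)
    (hdvd : p ^ a ∣ n) (hndvd : ¬ p ^ (a + 1) ∣ n) (v : KneserVertex n → ℤ)
    (hSv : ∑ s, v s = 0)
    (hpa : (p : ℤ)^a • v ∈ Rn n)
    (hpsi : ∀ i : Fin (n - 2), ((∑ s, Bv n (xvec n hn i) s * v s : ℤ) : ZMod (p^a)) = 0) :
    v ∈ Rn n := by
  have hpZ := ppZ p
  have hpn := pd_n n p a ha hdvd
  have hlamd := pa_dvd_lam n p a hp ha hdvd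
  set uu : ℤ := lamZ n / (p : ℤ)^a with huud
  have huu : (p : ℤ)^a * uu = lamZ n := Int.mul_ediv_cancel' hlamd
  have hpuu : ¬ (p : ℤ) ∣ uu := p_not_dvd_u n p a hp ha hdvd hndvd huu.symm
  have hpmu := p_not_dvd_mu n p a hp ha hdvd
  have hpn2 : ¬ (p : ℤ) ∣ ((n : ℤ) - 2) := p_not_dvd_nsub n p hp hpn 2 (by norm_num) (by norm_num)
  have hpn3 : ¬ (p : ℤ) ∣ ((n : ℤ) - 3) := p_not_dvd_nsub n p hp hpn 3 (by norm_num) (by norm_num)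
  -- step 1: replace v by Bv y modulo Rn
  obtain ⟨al, be, hab⟩ : ∃ al be : ℤ, al * muZ n + be * (p : ℤ)^a = 1 :=
    (hpZ.coprime_iff_not_dvd.mpr hpmu).pow_left.symm
  set y : Fin n → ℤ := fun j => (-al) * Btv n v j with hy
  have hyR : v - Bv n y ∈ Rn n := by
    have hW := lap_eq_mu_add_W n hn v hSv
    have hveq : v - Bv n y = al • (kneserLaplacian n *ᵥ v) + be • ((p : ℤ)^a • v) := by
      funext s
      have h1 := congrFun hW s
      have hBys : Bv n y s = (-al) * Bv n (Btv n v) s := by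
        show ∑ i, Bm n s i * ((-al) * Btv n v i) = (-al) * ∑ i, Bm n s i * Btv n v i
        rw [Finset.mul_sum]
        exact Finset.sum_congr rfl fun i _ => by ring
      simp only [Pi.add_apply, Pi.smul_apply, Pi.sub_apply, smul_eq_mul] at h1 ⊢
      rw [hBys]
      linear_combination (-(v s)) * hab + (-al) * h1
    rw [hveq]
    exact Submodule.add_mem _ (Submodule.smul_mem _ _ (lap_mem n v)) (Submodule.smul_mem _ _ hpa)
  obtain ⟨z, hz⟩ := mem_Rn hyR
  have hSBtv : ∑ j, Btv n v j = 0 := by rw [sum_Btv, hSv, mul_zero]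
  have hSy : ∑ j, y j = 0 := by
    show ∑ j, (-al) * Btv n v j = 0
    rw [← Finset.mul_sum, hSBtv, mul_zero]
  -- psi transfer to y and coordinate divisibility
  have hc0 : (((p : ℤ)^a : ℤ) : ZMod (p^a)) = 0 := by
    rw [cast_zero_iff_dvd]
  have hpsiy : ∀ i : Fin (n - 2),
      (((((n : ℤ) - 2) * (y (lo n i) - y (bb n hn))) : ℤ) : ZMod (p^a)) = 0 := by
    intro i
    have hsplit : ∑ s, Bv n (xvec n hn i) s * v s
        = ∑ s, Bv n (xvec n hn i) s * Bv n y s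
          + ∑ s, Bv n (xvec n hn i) s * (kneserLaplacian n *ᵥ z) s := by
      rw [← Finset.sum_add_distrib]
      refine Finset.sum_congr rfl fun s _ => ?_
      have hzs := congrFun hz s
      simp only [Pi.sub_apply] at hzs
      linear_combination (-(Bv n (xvec n hn i) s)) * hzs
    have hLq : kneserLaplacian n *ᵥ Bv n (xvec n hn i) = lamZ n • Bv n (xvec n hn i) := by
      rw [lap_Bv n hn, sum_xvec n hn i]
      funext s
      simp [mul_comm]
    have hlapdot : ∑ s, Bv n (xvec n hn i) s * (kneserLaplacian n *ᵥ z) s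
        = (p : ℤ)^a * (uu * ∑ s, Bv n (xvec n hn i) s * z s) := by
      rw [dot_lap_comm, hLq]
      have : ∀ s, (lamZ n • Bv n (xvec n hn i)) s * z s
          = lamZ n * (Bv n (xvec n hn i) s * z s) := by
        intro s
        simp only [Pi.smul_apply, smul_eq_mul]
        ring
      rw [Finset.sum_congr rfl fun s _ => this s, ← Finset.mul_sum, ← huu]
      ring
    have hdot : ∑ s, Bv n (xvec n hn i) s * Bv n y s
        = ((n : ℤ) - 2) * (y (lo n i) - y (bb n hn)) := by
      rw [dot_Bv_Bv n _ y]
      have hd1 : ∑ j, xvec n hn i j * y j = y (lo n i) - y (bb n hn) := dot_xvec n hn i y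
      rw [hd1, sum_xvec n hn i]
      ring
    have hpsi_i := hpsi i
    rw [hsplit, hdot, hlapdot] at hpsi_i
    have : ((((n : ℤ) - 2) * (y (lo n i) - y (bb n hn)) : ℤ) : ZMod (p^a))
        + (((p : ℤ)^a : ℤ) : ZMod (p^a)) * ((uu * ∑ s, Bv n (xvec n hn i) s * z s : ℤ) : ZMod (p^a))
        = 0 := by
      push_cast at hpsi_i ⊢
      exact hpsi_i
    rw [hc0, zero_mul, add_zero] at this
    exact this
  have hcomp : ∀ i : Fin (n - 2), (p : ℤ)^a ∣ (y (lo n i) - y (bb n hn)) := by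
    intro i
    rw [← cast_zero_iff_dvd p a]
    exact cancel_unit p a hpn2 (hpsiy i)
  -- divisibility at the special coordinate
  have hbmem : bb n hn ∈ Finset.univ.erase (exc n hn) :=
    Finset.mem_erase.mpr ⟨fun h => exc_ne_bb n hn h.symm, Finset.mem_univ _⟩
  have hjlt : ∀ j : Fin n, j ≠ bb n hn → j ≠ exc n hn → j.val < n - 2 := by
    intro j hj1 hj2
    have hv2 := j.2
    have h1 : j.val ≠ n - 1 := fun h => hj1 (by apply Fin.ext; simpa [bb] using h)
    have h2 : j.val ≠ n - 2 := fun h => hj2 (by apply Fin.ext; simpa [exc] using h)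
    omega
  have hloj : ∀ (j : Fin n) (h : j.val < n - 2), lo n ⟨j.val, h⟩ = j := by
    intro j h
    apply Fin.ext
    rfl
  have hexc : (p : ℤ)^a ∣ (y (exc n hn) + ((n : ℤ) - 1) * y (bb n hn)) := by
    have e1 : y (exc n hn) + ∑ j ∈ Finset.univ.erase (exc n hn), y j = 0 := by
      rw [Finset.add_sum_erase Finset.univ y (Finset.mem_univ (exc n hn))]
      exact hSy
    have e2 := Finset.add_sum_erase _ y hbmem
    have hcard : ((Finset.univ.erase (exc n hn)).erase (bb n hn)).card = n - 2 := by
      rw [Finset.card_erase_of_mem hbmem, Finset.card_erase_of_mem (Finset.mem_univ _),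
        Finset.card_univ, Fintype.card_fin]
      omega
    have hTsum : y (exc n hn) + ((n : ℤ) - 1) * y (bb n hn)
        = ∑ j ∈ (Finset.univ.erase (exc n hn)).erase (bb n hn), (y (bb n hn) - y j) := by
      rw [Finset.sum_sub_distrib, Finset.sum_const, hcard]
      have hc2 : ((n - 2 : ℕ) : ℤ) = (n : ℤ) - 2 := by
        push_cast [Nat.cast_sub (by omega : 2 ≤ n)]
        ring
      rw [nsmul_eq_mul, hc2]
      linarith [e1, e2]
    rw [hTsum]
    refine Finset.dvd_sum fun j hj => ?_
    have hj1 : j ≠ bb n hn := (Finset.mem_erase.mp hj).1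
    have hj2 : j ≠ exc n hn := (Finset.mem_erase.mp (Finset.mem_erase.mp hj).2).1
    have hlt := hjlt j hj1 hj2
    have hd := hcomp ⟨j.val, hlt⟩
    rw [hloj j hlt] at hd
    have : y (bb n hn) - y j = -(y j - y (bb n hn)) := by ring
    rw [this]
    exact dvd_neg.mpr hd
  -- the correction vector
  set hv : Fin n → ℤ := fun j => 1 - (if j = exc n hn then (n : ℤ) else 0) with hhv
  have hdall : ∀ j, (p : ℤ)^a ∣ (y j - y (bb n hn) * hv j) := by
    intro j
    by_cases hje : j = exc n hn
    · subst hje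
      have heq : y (exc n hn) - y (bb n hn) * (1 - (if exc n hn = exc n hn then (n : ℤ) else 0))
          = y (exc n hn) + ((n : ℤ) - 1) * y (bb n hn) := by
        rw [if_pos rfl]; ring
      show (p : ℤ)^a ∣ y (exc n hn) - y (bb n hn) * (1 - (if exc n hn = exc n hn then (n : ℤ) else 0))
      rw [heq]
      exact hexc
    · show (p : ℤ)^a ∣ y j - y (bb n hn) * (1 - (if j = exc n hn then (n : ℤ) else 0))
      rw [if_neg hje]
      by_cases hjb : j = bb n hn
      · subst hjb
        have : y (bb n hn) - y (bb n hn) * (1 - 0) = 0 := by ring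
        rw [this]
        exact dvd_zero _
      · have hlt := hjlt j hjb hje
        have hd := hcomp ⟨j.val, hlt⟩
        rw [hloj j hlt] at hd
        have : y j - y (bb n hn) * (1 - 0) = y j - y (bb n hn) := by ring
        rw [this]
        exact hd
  set w : Fin n → ℤ := fun j => (y j - y (bb n hn) * hv j) / (p : ℤ)^a with hwd
  have hw : ∀ j, (p : ℤ)^a * w j = y j - y (bb n hn) * hv j := fun j => Int.mul_ediv_cancel' (hdall j)
  have hShv : ∑ j, hv j = 0 := by
    show ∑ j, (1 - (if j = exc n hn then (n : ℤ) else 0)) = 0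
    rw [Finset.sum_sub_distrib, Finset.sum_const, Finset.sum_ite_eq' Finset.univ (exc n hn)]
    simp
  have hSw : ∑ j, w j = 0 := by
    have h1 : (p : ℤ)^a * ∑ j, w j = ∑ j, (y j - y (bb n hn) * hv j) := by
      rw [Finset.mul_sum]
      exact Finset.sum_congr rfl fun j _ => hw j
    rw [Finset.sum_sub_distrib, hSy, ← Finset.mul_sum, hShv] at h1
    have h2 : (p : ℤ)^a * ∑ j, w j = 0 := by rw [h1]; ring
    rcases mul_eq_zero.mp h2 with h | h
    · exact absurd h (pow_ne_zero _ (by exact_mod_cast (Fact.out : p.Prime).pos.ne'))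
    · exact h
  have hBy : Bv n y = y (bb n hn) • Bv n hv + (p : ℤ)^a • Bv n w := by
    funext s
    simp only [Pi.add_apply, Pi.smul_apply, smul_eq_mul]
    show ∑ i, Bm n s i * y i = _
    have hpt : ∀ i, Bm n s i * y i
        = y (bb n hn) * (Bm n s i * hv i) + (p : ℤ)^a * (Bm n s i * w i) := by
      intro i
      linear_combination (-(Bm n s i)) * hw i
    rw [Finset.sum_congr rfl fun i _ => hpt i, Finset.sum_add_distrib, ← Finset.mul_sum,
      ← Finset.mul_sum]
    rfl
  have hHmem : ((n : ℤ) - 3) • Bv n hv ∈ Rn n := by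
    refine ⟨(-2 : ℤ) • Bv n (fun j => if j = exc n hn then (1 : ℤ) else 0), ?_⟩
    rw [Matrix.mulVecLin_apply, Matrix.mulVec_smul, lap_Bv n hn]
    funext s
    have hSe : ∑ j, (if j = exc n hn then (1 : ℤ) else 0) = 1 := by
      rw [Finset.sum_ite_eq' Finset.univ (exc n hn)]
      simp
    simp only [Pi.smul_apply, smul_eq_mul, hSe]
    have hBvhv : Bv n hv s = 2 - (n : ℤ) * Bv n (fun j => if j = exc n hn then (1 : ℤ) else 0) s := by
      show ∑ i, Bm n s i * hv i = _
      have hpt : ∀ i, Bm n s i * hv i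
          = Bm n s i - (n : ℤ) * (Bm n s i * (if i = exc n hn then (1 : ℤ) else 0)) := by
        intro i
        show Bm n s i * (1 - (if i = exc n hn then (n : ℤ) else 0)) = _
        split_ifs <;> ring
      rw [Finset.sum_congr rfl fun i _ => hpt i, Finset.sum_sub_distrib, sum_B_row,
        ← Finset.mul_sum]
      rfl
    rw [hBvhv]
    have h2l := two_lam n
    linear_combination (- Bv n (fun j => if j = exc n hn then (1 : ℤ) else 0) s) * h2l
  have hfin : (((n : ℤ) - 3) * uu) • v ∈ Rn n := by
    have hv1 : (((n : ℤ) - 3) * uu) • v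
        = (((n : ℤ) - 3) * uu) • (v - Bv n y) + (uu * y (bb n hn)) • (((n : ℤ) - 3) • Bv n hv)
          + ((n : ℤ) - 3) • (lamZ n • Bv n w) := by
      rw [hBy, ← huu]
      module
    rw [hv1]
    exact Submodule.add_mem _
      (Submodule.add_mem _ (Submodule.smul_mem _ _ hyR) (Submodule.smul_mem _ _ hHmem))
      (Submodule.smul_mem _ _ (lamBv_mem n hn w hSw))
  have hcop : IsCoprime ((p : ℤ)^a) (((n : ℤ) - 3) * uu) :=
    ((hpZ.coprime_iff_not_dvd.mpr hpn3).mul_right (hpZ.coprime_iff_not_dvd.mpr hpuu)).pow_left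
  exact mem_of_coprime hcop.symm hfin hpa

lemma cast_pa_mul (p a : ℕ) (x : ℤ) : (((p : ℤ)^a * x : ℤ) : ZMod (p^a)) = 0 := by
  rw [ZMod.intCast_zmod_eq_zero_iff_dvd]
  push_cast
  exact Dvd.intro x rfl

lemma dot_q_lap (n : ℕ) (hn : 5 ≤ n) (i : Fin (n - 2)) (z : KneserVertex n → ℤ) :
    ∑ s, Bv n (xvec n hn i) s * (kneserLaplacian n *ᵥ z) s
      = lamZ n * ∑ s, Bv n (xvec n hn i) s * z s := by
  have hLq : kneserLaplacian n *ᵥ Bv n (xvec n hn i) = lamZ n • Bv n (xvec n hn i) := by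
    rw [lap_Bv n hn, sum_xvec n hn i]
    funext s
    simp [mul_comm]
  rw [dot_lap_comm, hLq]
  have hpt : ∀ s, (lamZ n • Bv n (xvec n hn i)) s * z s
      = lamZ n * (Bv n (xvec n hn i) s * z s) := by
    intro s
    simp only [Pi.smul_apply, smul_eq_mul]
    ring
  rw [Finset.sum_congr rfl fun s _ => hpt s, ← Finset.mul_sum]

lemma pa_kill (n p a : ℕ) [Fact p.Prime] (hp : 3 < p) (ha : 1 ≤ a) (hdvd : p ^ a ∣ n)
    (hndvd : ¬ p ^ (a + 1) ∣ n) (g : KneserCokernel n) (k : ℕ)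
    (hk : (p : ℤ)^k • g = 0) (hlm : (lamZ n * muZ n) • g = 0) :
    (p : ℤ)^a • g = 0 := by
  rcases le_or_gt k a with h | h
  · have he : (p : ℤ)^a = (p : ℤ)^(a-k) * (p : ℤ)^k := by
      rw [← pow_add]
      congr 1
      omega
    rw [he, mul_smul, hk, smul_zero]
  · have hpZ := ppZ p
    have hlamd := pa_dvd_lam n p a hp ha hdvd
    set uu : ℤ := lamZ n / (p : ℤ)^a with huud
    have huu : (p : ℤ)^a * uu = lamZ n := Int.mul_ediv_cancel' hlamd
    have hpuu : ¬ (p : ℤ) ∣ uu := p_not_dvd_u n p a hp ha hdvd hndvd huu.symm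
    have hpmu := p_not_dvd_mu n p a hp ha hdvd
    have hcop : IsCoprime ((p : ℤ)^(k-a)) (uu * muZ n) :=
      ((hpZ.coprime_iff_not_dvd.mpr hpuu).mul_right (hpZ.coprime_iff_not_dvd.mpr hpmu)).pow_left
    obtain ⟨al, be, hab⟩ := hcop
    have key : (p : ℤ)^a • g = (al * (p : ℤ)^(k-a) + be * (uu * muZ n)) • ((p : ℤ)^a • g) := by
      rw [hab, one_smul]
    have h1 : (p : ℤ)^(k-a) • ((p : ℤ)^a • g) = (p : ℤ)^k • g := by
      rw [smul_smul, ← pow_add]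
      congr 2
      omega
    have h2 : (uu * muZ n) • ((p : ℤ)^a • g) = (lamZ n * muZ n) • g := by
      rw [smul_smul]
      congr 1
      rw [← huu]
      ring
    rw [key, add_smul, mul_smul, mul_smul, h1, h2, hk, hlm, smul_zero, smul_zero, add_zero]

end KneserAux

set_option maxHeartbeats 1600000 in
set_option synthInstance.maxHeartbeats 100000 in
open Matrix KneserAux in
theorem kneser_sylow_p_dvd_n (n p a : ℕ) [Fact p.Prime] (hn : 5 ≤ n) (hp : 3 < p)
    (ha : 1 ≤ a) (hdvd : p ^ a ∣ n) (hndvd : ¬ p ^ (a + 1) ∣ n) :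
    Nonempty ((AddCommGroup.primaryComponent (criticalGroup n) p) ≃+
      (Fin (n - 2) → ZMod (p ^ a))) := by
  classical
  haveI : NeZero (p^a) := ⟨pow_ne_zero a (Fact.out : p.Prime).pos.ne'⟩
  have hpZ := ppZ p
  have hlamd := pa_dvd_lam n p a hp ha hdvd
  set uu : ℤ := lamZ n / (p : ℤ)^a with huud
  have huu : (p : ℤ)^a * uu = lamZ n := Int.mul_ediv_cancel' hlamd
  have hpuu : ¬ (p : ℤ) ∣ uu := p_not_dvd_u n p a hp ha hdvd hndvd huu.symm
  have hpn := pd_n n p a ha hdvd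
  have hpn1 : ¬ (p : ℤ) ∣ ((n : ℤ) - 1) := p_not_dvd_nsub n p hp hpn 1 (by norm_num) (by norm_num)
  have hpn2 : ¬ (p : ℤ) ∣ ((n : ℤ) - 2) := p_not_dvd_nsub n p hp hpn 2 (by norm_num) (by norm_num)
  -- the pairing homomorphism on the ambient lattice
  set q : Fin (n-2) → (KneserVertex n → ℤ) := fun i => Bv n (xvec n hn i) with hq
  have hPsiAdd : ∀ v w : KneserVertex n → ℤ, ∀ i : Fin (n-2),
      ((∑ s, q i s * (v + w) s : ℤ) : ZMod (p^a))
        = ((∑ s, q i s * v s : ℤ) : ZMod (p^a)) + ((∑ s, q i s * w s : ℤ) : ZMod (p^a)) := by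
    intro v w i
    have h1 : ∑ s, q i s * (v + w) s = (∑ s, q i s * v s) + (∑ s, q i s * w s) := by
      rw [← Finset.sum_add_distrib]
      exact Finset.sum_congr rfl fun s _ => by simp [Pi.add_apply]; ring
    rw [h1]
    push_cast
    ring
  set Psi : (KneserVertex n → ℤ) →+ (Fin (n-2) → ZMod (p^a)) :=
    AddMonoidHom.mk' (fun v i => ((∑ s, q i s * v s : ℤ) : ZMod (p^a)))
      (fun v w => funext fun i => hPsiAdd v w i) with hPsi
  have hker : ∀ z : KneserVertex n → ℤ, Psi (kneserLaplacian n *ᵥ z) = 0 := by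
    intro z
    funext i
    show ((∑ s, q i s * (kneserLaplacian n *ᵥ z) s : ℤ) : ZMod (p^a)) = 0
    rw [hq]
    rw [dot_q_lap n hn i z, ← huu, mul_assoc]
    exact cast_pa_mul p a _
  set PsiL : (KneserVertex n → ℤ) →ₗ[ℤ] (Fin (n-2) → ZMod (p^a)) := Psi.toIntLinearMap with hPsiL
  have hle : LinearMap.range (Matrix.mulVecLin (kneserLaplacian n)) ≤ LinearMap.ker PsiL := by
    rintro x ⟨z, rfl⟩
    rw [LinearMap.mem_ker, Matrix.mulVecLin_apply]
    exact hker z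
  set psiQ : KneserCokernel n →ₗ[ℤ] (Fin (n-2) → ZMod (p^a)) :=
    Submodule.liftQ _ PsiL hle with hpsiQ
  have hpsiQ_mk : ∀ v : KneserVertex n → ℤ,
      psiQ (Submodule.Quotient.mk v) = Psi v := fun v => rfl
  set T := criticalGroup n with hT
  set PP := AddCommGroup.primaryComponent (↥T) p with hPP
  set φ : ↥PP →+ (Fin (n-2) → ZMod (p^a)) :=
    psiQ.toAddMonoidHom.comp ((T.subtype).comp PP.subtype) with hφ
  have hφ_apply : ∀ t : ↥PP, φ t = psiQ ((t : ↥T) : KneserCokernel n) := fun t => rfl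
  -- injectivity
  have hinj : Function.Injective φ := by
    rw [injective_iff_map_eq_zero]
    intro t ht
    set g : KneserCokernel n := ((t : ↥T) : KneserCokernel n) with hg
    have htor : IsOfFinAddOrder g := (t : ↥T).2
    obtain ⟨k, hk⟩ := t.2
    have hk0 : (p^k : ℕ) • (t : ↥T) = 0 := by
      rw [← hk]
    have hkg : (p : ℤ)^k • g = 0 := by
      have h1 := congrArg (T.subtype) hk0
      rw [map_nsmul, map_zero] at h1
      have h2 : ((p^k : ℕ) : ℤ) • g = 0 := by
        rw [natCast_zsmul]
        exact h1
      rw [← h2]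
      push_cast
      rfl
    have hlm : (lamZ n * muZ n) • g = 0 := torsion_killed n hn g htor
    have hpag : (p : ℤ)^a • g = 0 := pa_kill n p a hp ha hdvd hndvd g k hkg hlm
    obtain ⟨v, hv⟩ := Submodule.Quotient.mk_surjective _ g
    have hSv : ∑ s, v s = 0 := by
      refine torsion_rep_sum n hn v ?_
      rw [hv]
      exact htor
    have hpamem : (p : ℤ)^a • v ∈ Rn n := by
      rw [← Submodule.Quotient.mk_eq_zero, Submodule.Quotient.mk_smul, hv]
      exact hpag
    have hpsi : ∀ i : Fin (n-2), ((∑ s, Bv n (xvec n hn i) s * v s : ℤ) : ZMod (p^a)) = 0 := by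
      intro i
      have h1 : Psi v = 0 := by
        rw [← hpsiQ_mk v, hv]
        exact ht
      exact congrFun h1 i
    have hvmem := master n p a hn hp ha hdvd hndvd v hSv hpamem hpsi
    have hg0 : g = 0 := by
      rw [← hv, Submodule.Quotient.mk_eq_zero]
      exact hvmem
    apply Subtype.ext
    apply Subtype.ext
    exact hg0
  -- surjectivity
  have hsurj : Function.Surjective φ := by
    intro c
    have hpuun2 : ¬ (p : ℤ) ∣ (uu * ((n : ℤ) - 2)) := by
      intro h
      rcases (Prime.dvd_mul hpZ).mp h with h' | h'
      · exact hpuu h'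
      · exact hpn2 h'
    obtain ⟨al1, hal1⟩ := inv_cast p a hpuun2
    obtain ⟨al2, hal2⟩ := inv_cast p a hpn1
    set sg : ZMod (p^a) := ∑ i, c i with hsg
    set Ac : Fin (n-2) → ZMod (p^a) :=
      fun i => ((al1 : ℤ) : ZMod (p^a)) * (c i - ((al2 : ℤ) : ZMod (p^a)) * sg) with hAc
    set m : Fin (n-2) → ℤ := fun i => ((Ac i).val : ℤ) with hm
    have hmc : ∀ i, ((m i : ℤ) : ZMod (p^a)) = Ac i := by
      intro i
      show (((Ac i).val : ℤ) : ZMod (p^a)) = Ac i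
      rw [Int.cast_natCast, ZMod.natCast_val, ZMod.cast_id]
    set X : Fin n → ℤ := fun j => ∑ i, m i * xvec n hn i j with hX
    have hSX : ∑ j, X j = 0 := by
      show ∑ j, ∑ i, m i * xvec n hn i j = 0
      rw [Finset.sum_comm]
      refine Finset.sum_eq_zero fun i _ => ?_
      rw [← Finset.mul_sum, sum_xvec, mul_zero]
    set wv : KneserVertex n → ℤ := uu • Bv n X with hwv
    have hpaww : (p : ℤ)^a • wv = lamZ n • Bv n X := by rw [hwv, smul_smul, huu]
    have hper : (p : ℤ)^a • (Submodule.Quotient.mk wv : KneserCokernel n) = 0 := by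
      rw [← Submodule.Quotient.mk_smul, hpaww, Submodule.Quotient.mk_eq_zero]
      exact lamBv_mem n hn X hSX
    have hperN : (p^a : ℕ) • (Submodule.Quotient.mk wv : KneserCokernel n) = 0 := by
      have : ((p^a : ℕ) : ℤ) • (Submodule.Quotient.mk wv : KneserCokernel n) = 0 := by
        push_cast
        exact hper
      rw [natCast_zsmul] at this
      exact this
    have htorw : IsOfFinAddOrder (Submodule.Quotient.mk wv : KneserCokernel n) := by
      refine isOfFinAddOrder_iff_nsmul_eq_zero.mpr ⟨p^a, ?_, hperN⟩
      exact pow_pos (Fact.out : p.Prime).pos a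
    set tT : ↥T := ⟨Submodule.Quotient.mk wv, htorw⟩ with htT
    have horddvd : addOrderOf tT ∣ p^a := by
      apply addOrderOf_dvd_of_nsmul_eq_zero
      apply Subtype.ext
      have h1 : ((p^a • tT : ↥T) : KneserCokernel n) = (p^a) • ((tT : ↥T) : KneserCokernel n) :=
        map_nsmul T.subtype _ _
      rw [h1]
      simp only [ZeroMemClass.coe_zero]
      exact hperN
    obtain ⟨k, hkle, hordk⟩ := (Nat.dvd_prime_pow (Fact.out : p.Prime)).mp horddvd
    set tP : ↥PP := ⟨tT, ⟨k, by rw [← hordk]; exact addOrderOf_nsmul_eq_zero tT⟩⟩ with htP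
    refine ⟨tP, ?_⟩
    funext i
    have hφi : φ tP i = ((∑ s, q i s * wv s : ℤ) : ZMod (p^a)) := rfl
    rw [hφi]
    have hstep : ∑ s, q i s * wv s = uu * (((n : ℤ) - 2) * (X (lo n i) - X (bb n hn))) := by
      have h1 : ∀ s, q i s * wv s = uu * (Bv n (xvec n hn i) s * Bv n X s) := by
        intro s
        rw [hwv, hq]
        simp only [Pi.smul_apply, smul_eq_mul]
        ring
      rw [Finset.sum_congr rfl fun s _ => h1 s, ← Finset.mul_sum, dot_Bv_Bv n _ X,
        dot_xvec n hn i X, sum_xvec n hn i]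
      ring
    have hXlo : X (lo n i) = m i := by
      show ∑ i', m i' * xvec n hn i' (lo n i) = m i
      have h1 : ∀ i', m i' * xvec n hn i' (lo n i) = if i' = i then m i' else 0 := by
        intro i'
        show m i' * ((if lo n i = lo n i' then 1 else 0) - (if lo n i = bb n hn then 1 else 0)) = _
        rw [if_neg (lo_ne_bb n hn i)]
        by_cases h : i' = i
        · subst h
          rw [if_pos rfl, if_pos rfl]
          ring
        · have hne : lo n i ≠ lo n i' := by
            intro hh
            exact h (Fin.castLE_injective _ hh).symm
          rw [if_neg hne, if_neg h]
          ring
      rw [Finset.sum_congr rfl fun i' _ => h1 i', Finset.sum_ite_eq' Finset.univ i]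
      simp
    have hXbb : X (bb n hn) = - ∑ i', m i' := by
      show ∑ i', m i' * xvec n hn i' (bb n hn) = _
      have h1 : ∀ i', m i' * xvec n hn i' (bb n hn) = - m i' := by
        intro i'
        show m i' * ((if bb n hn = lo n i' then 1 else 0) - (if bb n hn = bb n hn then 1 else 0)) = _
        rw [if_neg (fun h => (lo_ne_bb n hn i') h.symm), if_pos rfl]
        ring
      rw [Finset.sum_congr rfl fun i' _ => h1 i']
      exact Finset.sum_neg_distrib _
    rw [hstep, hXlo, hXbb]
    have hsumcast : ((∑ i', m i' : ℤ) : ZMod (p^a)) = ∑ i', Ac i' := by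
      push_cast
      exact Finset.sum_congr rfl fun i' _ => hmc i'
    have hgoal1 : ((uu * (((n : ℤ) - 2) * (m i - - ∑ i', m i')) : ℤ) : ZMod (p^a))
        = ((uu : ℤ) : ZMod (p^a)) * ((((n : ℕ) : ZMod (p^a)) - 2)
            * (((m i : ℤ) : ZMod (p^a)) + ((∑ i', m i' : ℤ) : ZMod (p^a)))) := by
      push_cast
      ring
    rw [hgoal1, hmc i, hsumcast]
    have hsAc : ∑ i', Ac i' = ((al1 : ℤ) : ZMod (p^a))
        * (sg - (((n : ℕ) : ZMod (p^a)) - 2) * (((al2 : ℤ) : ZMod (p^a)) * sg)) := by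
      have hcard : ((n - 2 : ℕ) : ZMod (p^a)) = ((n : ℕ) : ZMod (p^a)) - 2 := by
        rw [Nat.cast_sub (by omega : 2 ≤ n)]
        norm_num
      show ∑ i' : Fin (n-2), ((al1 : ℤ) : ZMod (p^a)) * (c i' - ((al2 : ℤ) : ZMod (p^a)) * sg) = _
      rw [← Finset.mul_sum, Finset.sum_sub_distrib, Finset.sum_const, Finset.card_univ,
        Fintype.card_fin, nsmul_eq_mul, hcard, ← hsg]
    rw [hAc, hsAc]
    have hal1' : ((al1 : ℤ) : ZMod (p^a)) * (((uu : ℤ) : ZMod (p^a))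
        * (((n : ℕ) : ZMod (p^a)) - 2)) = 1 := by
      have := hal1
      push_cast at this
      linear_combination this
    have hal2' : ((al2 : ℤ) : ZMod (p^a)) * (((n : ℕ) : ZMod (p^a)) - 1) = 1 := by
      have := hal2
      push_cast at this
      linear_combination this
    set U : ZMod (p^a) := ((uu : ℤ) : ZMod (p^a))
    set A1 : ZMod (p^a) := ((al1 : ℤ) : ZMod (p^a))
    set A2 : ZMod (p^a) := ((al2 : ℤ) : ZMod (p^a))
    set Nc : ZMod (p^a) := ((n : ℕ) : ZMod (p^a))
    linear_combination (c i - A2*sg + sg - (Nc-2)*A2*sg) * hal1' - sg * hal2'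
  exact ⟨AddEquiv.ofBijective φ ⟨hinj, hsurj⟩⟩
end

section
/- Let n ≥ 5, let p > 3 be a prime, and suppose v_p(n−3) = a with a ≥ 1. Then the Sylow p-subgroup of the critical group K(KG(n,2)) is isomorphic to (ℤ/p^aℤ)^{n−1}; equivalently, the p-elementary divisor multiplicities of the Laplacian L of KG(n,2) are e_a = f = n−1, e_0 = g = n(n−3)/2, and e_i = 0 for all other i ≥ 1. -/
open AddCommGroup


theorem mem_primary_of_pow_smul {G : Type*} [AddCommGroup G] {p : ℕ} [Fact p.Prime]
    {g : G} {k : ℕ} (h : (p : ℤ) ^ k • g = 0) : g ∈ AddCommGroup.primaryComponent G p := by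
  have h' : (p ^ k) • g = 0 := by
    have := h
    rw [← Nat.cast_pow, natCast_zsmul] at this
    exact this
  have hd : addOrderOf g ∣ p ^ k := addOrderOf_dvd_of_nsmul_eq_zero h'
  obtain ⟨j, hj, hje⟩ := (Nat.dvd_prime_pow (Fact.out : p.Prime)).mp hd
  exact ⟨k, h'⟩

theorem pow_smul_primary {G : Type*} [AddCommGroup G] {p : ℕ} [Fact p.Prime]
    {g : G} (h : g ∈ AddCommGroup.primaryComponent G p) : ∃ k : ℕ, (p : ℤ) ^ k • g = 0 := by
  obtain ⟨k, hk⟩ := h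
  refine ⟨k, ?_⟩
  rw [← Nat.cast_pow, natCast_zsmul, ← hk]

/-- Key transfer lemma: a homomorphism with kernel and "cokernel on p-primary parts"
killed by a unit-mod-p integer induces an isomorphism of p-primary components. -/
theorem primaryEquiv_transfer {A B : Type*} [AddCommGroup A] [AddCommGroup B]
    (p : ℕ) [Fact p.Prime] (u : ℤ) (hu : IsCoprime u (p : ℤ)) (ψ : A →+ B)
    (h1 : ∀ a : A, ψ a = 0 → u • a = 0)
    (h2 : ∀ b : B, (∃ k : ℕ, (p : ℤ) ^ k • b = 0) → ∃ a : A, ψ a = u • b) :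
    Nonempty ((AddCommGroup.primaryComponent A p) ≃+ (AddCommGroup.primaryComponent B p)) := by
  have hmem : ∀ a : A, a ∈ AddCommGroup.primaryComponent A p →
      ψ a ∈ AddCommGroup.primaryComponent B p := by
    intro a ha
    obtain ⟨k, hk⟩ := pow_smul_primary ha
    exact mem_primary_of_pow_smul (k := k) (by rw [← map_zsmul ψ, hk, map_zero])
  let f : (AddCommGroup.primaryComponent A p) →+ (AddCommGroup.primaryComponent B p) :=
    { toFun := fun a => ⟨ψ a.1, hmem a.1 a.2⟩
      map_zero' := by ext; simp
      map_add' := by intro x y; ext; simp }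
  have hinj : Function.Injective f := by
    rintro ⟨a, ha⟩ ⟨a', ha'⟩ hff
    have h0 : ψ (a - a') = 0 := by
      have h' : ψ a = ψ a' := congrArg Subtype.val hff
      rw [map_sub, h', sub_self]
    have hu2 : u • (a - a') = 0 := h1 _ h0
    obtain ⟨k, hk⟩ := pow_smul_primary (AddSubgroup.sub_mem _ ha ha')
    obtain ⟨x, y, hxy⟩ := hu.pow_right (n := k)
    have : a - a' = 0 := by
      calc a - a' = (x * u + y * (p : ℤ) ^ k) • (a - a') := by rw [hxy, one_smul]
      _ = x • (u • (a - a')) + y • ((p : ℤ) ^ k • (a - a')) := by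
          rw [add_smul, mul_smul, mul_smul]
      _ = 0 := by rw [hu2, hk, smul_zero, smul_zero, add_zero]
    exact Subtype.ext (sub_eq_zero.mp this)
  have hsurj : Function.Surjective f := by
    rintro ⟨b, hb⟩
    obtain ⟨k, hk⟩ := pow_smul_primary hb
    obtain ⟨a, hab⟩ := h2 b ⟨k, hk⟩
    -- a' := u • a is p-primary-torsion
    have hps : ψ ((p : ℤ) ^ k • a) = 0 := by
      rw [map_zsmul, hab, smul_comm, hk, smul_zero]
    have hka : (p : ℤ) ^ k • (u • a) = 0 := by
      rw [smul_comm]; exact h1 _ hps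
    obtain ⟨x, y, hxy⟩ := (hu.mul_left hu).pow_right (n := k)
    refine ⟨⟨x • (u • a), mem_primary_of_pow_smul (k := k) ?_⟩, ?_⟩
    · rw [smul_comm, hka, smul_zero]
    · apply Subtype.ext
      show ψ (x • u • a) = b
      rw [map_zsmul, map_zsmul, hab]
      calc x • u • u • b = (x * (u * u)) • b := by rw [mul_smul, mul_smul]
      _ = (1 - y * (p:ℤ)^k) • b := by rw [← hxy]; ring_nf
      _ = b := by rw [sub_smul, one_smul, mul_smul, hk, smul_zero, sub_zero]
  exact ⟨AddEquiv.ofBijective f ⟨hinj, hsurj⟩⟩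

open Finset Matrix


/-- number of 2-subsets containing a given set t with card t ≤ 2 -/
theorem card_superpairs {n : ℕ} (t : Finset (Fin n)) (ht : t.card ≤ 2) :
    (Finset.univ.filter fun S : KneserVertex n => t ⊆ S.1).card
      = (n - t.card).choose (2 - t.card) := by
  have key : ∀ u ∈ tᶜ.powersetCard (2 - t.card), (u ∪ t).card = 2 := by
    intro u hu
    rw [mem_powersetCard] at hu
    have hdisj : Disjoint u t := by
      rw [Finset.disjoint_left]
      intro x hx
      exact (Finset.mem_compl.mp (hu.1 hx))
    rw [Finset.card_union_of_disjoint hdisj, hu.2]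
    omega
  have h : (Finset.univ.filter fun S : KneserVertex n => t ⊆ S.1).card
      = (tᶜ.powersetCard (2 - t.card)).card := by
    refine Finset.card_bij' (fun S _ => S.1 \ t) (fun u hu => ⟨u ∪ t, key u hu⟩) ?_ ?_ ?_ ?_
    · intro S hS
      simp only [mem_filter, mem_univ, true_and] at hS
      rw [mem_powersetCard]
      constructor
      · intro x hx
        rw [mem_compl]
        exact (Finset.mem_sdiff.mp hx).2
      · rw [card_sdiff_of_subset hS, S.2]
    · intro u hu
      simp only [mem_filter, mem_univ, true_and]
      exact Finset.subset_union_right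
    · intro S hS
      simp only [mem_filter, mem_univ, true_and] at hS
      exact Subtype.ext (Finset.sdiff_union_of_subset hS)
    · intro u hu
      rw [mem_powersetCard] at hu
      have hdisj : Disjoint u t := by
        rw [Finset.disjoint_left]
        intro x hx
        exact (Finset.mem_compl.mp (hu.1 hx))
      exact Finset.union_sdiff_cancel_right hdisj
  rw [h, Finset.card_powersetCard, Finset.card_compl, Fintype.card_fin]

/-- number of 2-subsets disjoint from a 2-subset -/
theorem card_disjointpairs {n : ℕ} (S : KneserVertex n) :
    (Finset.univ.filter fun T : KneserVertex n => Disjoint S.1 T.1).card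
      = (n - 2).choose 2 := by
  have key : ∀ u ∈ (S.1)ᶜ.powersetCard 2, u.card = 2 := by
    intro u hu; exact (mem_powersetCard.mp hu).2
  have h : (Finset.univ.filter fun T : KneserVertex n => Disjoint S.1 T.1).card
      = ((S.1)ᶜ.powersetCard 2).card := by
    refine Finset.card_bij' (fun T _ => T.1) (fun u hu => ⟨u, key u hu⟩) ?_ ?_ ?_ ?_
    · intro T hT
      simp only [mem_filter, mem_univ, true_and] at hT
      rw [mem_powersetCard]
      refine ⟨?_, T.2⟩
      intro x hx
      rw [mem_compl]
      exact fun hxS => Finset.disjoint_left.mp hT hxS hx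
    · intro u hu
      rw [mem_powersetCard] at hu
      simp only [mem_filter, mem_univ, true_and]
      rw [Finset.disjoint_left]
      intro x hx hxu
      exact (Finset.mem_compl.mp (hu.1 hxu)) hx
    · intro T hT; rfl
    · intro u hu; rfl
  rw [h, Finset.card_powersetCard, Finset.card_compl, Fintype.card_fin, S.2]

namespace KneserProof

variable (n : ℕ)

def NT (n : ℕ) : Matrix (KneserVertex n) (Fin n) ℤ := fun S x => if x ∈ S.1 then 1 else 0
def C2 (n : ℕ) : Matrix (Fin n) (KneserVertex n) ℤ := fun x S => (if x ∈ S.1 then 2 else 0) - 1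
noncomputable def L2 (n : ℕ) : Matrix (KneserVertex n) (KneserVertex n) ℤ :=
  (2 : ℤ) • kneserLaplacian n
def u2 (n : ℕ) : ℤ := ((n : ℤ) - 1) * ((n : ℤ) - 4)
def Q2 (n : ℕ) : Matrix (Fin n) (Fin n) ℤ :=
  fun x y => ((n : ℤ) - 3) * ((n : ℤ) * (if x = y then 1 else 0) - 1)

lemma sum_ite_mem_univ {α : Type*} [Fintype α] [DecidableEq α] (s : Finset α) (c : ℤ) :
    ∑ x : α, (if x ∈ s then c else 0) = s.card * c := by
  rw [Finset.sum_ite_mem, Finset.univ_inter, Finset.sum_const, nsmul_eq_mul]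

lemma sum_ite_pred {α : Type*} [Fintype α] (P : α → Prop) [DecidablePred P] (c : ℤ) :
    ∑ x : α, (if P x then c else 0) = (Finset.univ.filter P).card * c := by
  rw [← Finset.sum_filter, Finset.sum_const, nsmul_eq_mul]

lemma inter_card_one {n : ℕ} (S T : KneserVertex n) (hne : S ≠ T)
    (hd : ¬ Disjoint S.1 T.1) : (S.1 ∩ T.1).card = 1 := by
  have h2 : (S.1 ∩ T.1).card ≤ 2 := le_trans (Finset.card_le_card Finset.inter_subset_left) (le_of_eq S.2)
  have h0 : (S.1 ∩ T.1).card ≠ 0 := by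
    intro h
    exact hd (Finset.disjoint_iff_inter_eq_empty.mpr (Finset.card_eq_zero.mp h))
  have hne2 : (S.1 ∩ T.1).card ≠ 2 := by
    intro h
    have e1 : S.1 ∩ T.1 = S.1 :=
      Finset.eq_of_subset_of_card_le Finset.inter_subset_left (by rw [h, S.2])
    have e2 : S.1 ∩ T.1 = T.1 :=
      Finset.eq_of_subset_of_card_le Finset.inter_subset_right (by rw [h, T.2])
    exact hne (Subtype.ext (e1.symm.trans e2))
  omega

/-- degree of each vertex -/
lemma deg_eq (hn : 5 ≤ n) (S : KneserVertex n) :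
    ((kneserGraph2 n).degree S : ℤ) * 2 = ((n : ℤ) - 2) * ((n : ℤ) - 3) := by
  have h1 : (kneserGraph2 n).degree S = (n - 2).choose 2 := by
    rw [← SimpleGraph.card_neighborFinset_eq_degree, SimpleGraph.neighborFinset_eq_filter,
      ← card_disjointpairs S]
    rfl
  have h2 : (n - 2).choose 2 * 2 = (n - 2) * (n - 3) := by
    rw [Nat.choose_two_right]
    have hee : n - 2 - 1 = n - 3 := by omega
    have he : Even ((n - 2) * (n - 2 - 1)) := by
      rw [hee]
      have h3 : n - 2 = (n - 3) + 1 := by omega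
      rw [h3, mul_comm]
      exact Nat.even_mul_succ_self (n - 3)
    rw [Nat.div_mul_cancel he.two_dvd, hee]
  have h4 := congrArg (fun k : ℕ => (k : ℤ)) h2
  simp only [Nat.cast_mul, Nat.cast_ofNat] at h4
  rw [h1]
  rw [show ((n - 2 : ℕ) : ℤ) = (n : ℤ) - 2 by omega, show ((n - 3 : ℕ) : ℤ) = (n : ℤ) - 3 by omega] at h4
  exact_mod_cast h4

/-- Identity (i): 2L = u2 • 1 + Nᵀ C -/
theorem identity_one (hn : 5 ≤ n) : L2 n = u2 n • 1 + NT n * C2 n := by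
  ext S T
  have hsum : (NT n * C2 n) S T = 2 * ((S.1 ∩ T.1).card : ℤ) - 2 := by
    rw [Matrix.mul_apply]
    have : ∀ x : Fin n, NT n S x * C2 n x T
        = (if x ∈ S.1 ∩ T.1 then (2:ℤ) else 0) - (if x ∈ S.1 then 1 else 0) := by
      intro x
      simp only [NT, C2, Finset.mem_inter]
      split_ifs <;> simp_all <;> ring
    rw [Finset.sum_congr rfl (fun x _ => this x), Finset.sum_sub_distrib,
      sum_ite_mem_univ, sum_ite_mem_univ, S.2]
    push_cast
    ring
  have hlap : L2 n S T = 2 * ((if S = T then ((kneserGraph2 n).degree S : ℤ) else 0)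
      - (if (kneserGraph2 n).Adj S T then 1 else 0)) := by
    simp only [L2, kneserLaplacian, SimpleGraph.lapMatrix, SimpleGraph.degMatrix,
      Matrix.smul_apply, Matrix.sub_apply, Matrix.diagonal_apply, SimpleGraph.adjMatrix_apply]
    rw [smul_eq_mul]
  rw [hlap, Matrix.add_apply, Matrix.smul_apply, Matrix.one_apply, hsum, smul_eq_mul]
  by_cases hST : S = T
  · subst hST
    rw [if_pos rfl, if_pos rfl, if_neg ((kneserGraph2 n).loopless.irrefl S), Finset.inter_self, S.2]
    have hdeg := deg_eq n hn S
    rw [u2]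
    push_cast
    nlinarith [hdeg]
  · rw [if_neg hST, if_neg hST, mul_zero, zero_add]
    by_cases hadj : (kneserGraph2 n).Adj S T
    · have hd : Disjoint S.1 T.1 := hadj
      rw [if_pos hadj, Finset.disjoint_iff_inter_eq_empty.mp hd, Finset.card_empty]
      norm_num
    · have hone : (S.1 ∩ T.1).card = 1 := inter_card_one S T hST (fun h => hadj h)
      rw [if_neg hadj, hone]
      norm_num

/-- Identity (ii): u2 • 1 + C Nᵀ = Q2 -/
theorem identity_two (hn : 5 ≤ n) : u2 n • (1 : Matrix (Fin n) (Fin n) ℤ) + C2 n * NT n = Q2 n := by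
  ext x y
  have hsum : (C2 n * NT n) x y
      = 2 * (((Finset.univ.filter fun S : KneserVertex n => x ∈ S.1 ∧ y ∈ S.1).card : ℤ))
        - ((Finset.univ.filter fun S : KneserVertex n => y ∈ S.1).card : ℤ) := by
    rw [Matrix.mul_apply]
    have : ∀ S : KneserVertex n, C2 n x S * NT n S y
        = (if x ∈ S.1 ∧ y ∈ S.1 then (2:ℤ) else 0) - (if y ∈ S.1 then 1 else 0) := by
      intro S
      simp only [C2, NT]
      split_ifs <;> simp_all <;> ring
    rw [Finset.sum_congr rfl (fun S _ => this S), Finset.sum_sub_distrib,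
      sum_ite_pred, sum_ite_pred]
    push_cast
    ring
  have hy : (Finset.univ.filter fun S : KneserVertex n => y ∈ S.1).card = n - 1 := by
    have := card_superpairs ({y} : Finset (Fin n)) (by simp)
    simp only [Finset.card_singleton, Finset.singleton_subset_iff] at this
    rw [this]
    simp [Nat.choose_one_right]
  rw [Matrix.add_apply, Matrix.smul_apply, Matrix.one_apply, hsum, Q2, smul_eq_mul]
  by_cases hxy : x = y
  · subst hxy
    have hx : (Finset.univ.filter fun S : KneserVertex n => x ∈ S.1 ∧ x ∈ S.1).card = n - 1 := by
      rw [← hy]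
      congr 1
      ext S
      simp
    rw [hx, hy, u2, show ((n - 1 : ℕ) : ℤ) = (n : ℤ) - 1 by omega]
    simp only [if_pos rfl, if_true, eq_self_iff_true]
    ring
  · have hx2 : (Finset.univ.filter fun S : KneserVertex n => x ∈ S.1 ∧ y ∈ S.1).card = 1 := by
      have hcard : ({x, y} : Finset (Fin n)).card = 2 := by
        rw [Finset.card_insert_of_notMem (by simpa using hxy), Finset.card_singleton]
      have hsp := card_superpairs ({x, y} : Finset (Fin n)) (le_of_eq hcard)
      rw [hcard] at hsp
      have heq : (Finset.univ.filter fun S : KneserVertex n => x ∈ S.1 ∧ y ∈ S.1)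
          = (Finset.univ.filter fun S : KneserVertex n => ({x, y} : Finset (Fin n)) ⊆ S.1) := by
        ext S
        simp [Finset.insert_subset_iff]
      rw [heq, hsp]
      simp
    rw [hx2, hy, u2, show ((n - 1 : ℕ) : ℤ) = (n : ℤ) - 1 by omega]
    simp only [if_neg hxy]
    ring


/-- Derived identity: Nᵀ Q₂ = L₂ Nᵀ -/
theorem NQ_eq (hn : 5 ≤ n) : NT n * Q2 n = L2 n * NT n := by
  rw [← identity_two n hn, identity_one n hn]
  rw [Matrix.mul_add, Matrix.add_mul, Matrix.mul_smul, Matrix.smul_mul,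
    Matrix.mul_one, Matrix.one_mul, Matrix.mul_assoc]

/-- Nᵀ has trivial kernel -/
theorem NT_ker (hn : 5 ≤ n) (x : Fin n → ℤ) (hx : NT n *ᵥ x = 0) : x = 0 := by
  have hpair : ∀ i j : Fin n, i ≠ j → x i + x j = 0 := by
    intro i j hij
    have hS : ({i, j} : Finset (Fin n)).card = 2 := Finset.card_pair hij
    have := congrFun hx ⟨{i, j}, hS⟩
    rw [Matrix.mulVec, dotProduct] at this
    simp only [NT, Pi.zero_apply] at this
    have hterm : ∀ y : Fin n, (if y ∈ ({i, j} : Finset (Fin n)) then (1:ℤ) else 0) * x y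
        = (if y ∈ ({i, j} : Finset (Fin n)) then x y else 0) := fun y => by split_ifs <;> simp
    rw [Finset.sum_congr rfl (fun y _ => hterm y), Finset.sum_ite_mem, Finset.univ_inter,
      Finset.sum_pair hij] at this
    exact this
  funext i
  have h3 : 1 < (Finset.univ.erase i).card := by
    rw [Finset.card_erase_of_mem (Finset.mem_univ i), Finset.card_univ, Fintype.card_fin]
    omega
  obtain ⟨j, hj, k, hk, hjk⟩ := Finset.one_lt_card.mp h3
  have hij : i ≠ j := fun h => (Finset.ne_of_mem_erase hj) h.symm
  have hik : i ≠ k := fun h => (Finset.ne_of_mem_erase hk) h.symm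
  have e1 := hpair i j hij
  have e2 := hpair i k hik
  have e3 := hpair j k hjk
  simp only [Pi.zero_apply]
  linarith

/-- entrywise formula for Q₂ *ᵥ y -/
theorem Q2_mulVec (y : Fin n → ℤ) (j : Fin n) :
    (Q2 n *ᵥ y) j = ((n : ℤ) - 3) * ((n : ℤ) * y j - ∑ k, y k) := by
  rw [Matrix.mulVec, dotProduct]
  simp only [Q2]
  have : ∀ k : Fin n, ((n : ℤ) - 3) * ((n : ℤ) * (if j = k then 1 else 0) - 1) * y k
      = ((n : ℤ) - 3) * ((n : ℤ) * (if j = k then y k else 0) - y k) := by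
    intro k
    split_ifs <;> ring
  rw [Finset.sum_congr rfl (fun k _ => this k)]
  rw [show (fun k => ((n : ℤ) - 3) * ((n : ℤ) * (if j = k then y k else 0) - y k))
    = (fun k => ((n : ℤ) - 3) * (n : ℤ) * (if j = k then y k else 0) - ((n : ℤ) - 3) * y k)
    from funext fun k => by ring]
  rw [Finset.sum_sub_distrib, ← Finset.mul_sum, ← Finset.mul_sum, Finset.sum_ite_eq]
  simp only [Finset.mem_univ, if_true]
  ring

/-- the comparison map to the explicit group -/
def phi (n p a : ℕ) : (Fin n → ℤ) →ₗ[ℤ] ((Fin (n - 1) → ZMod (p ^ a)) × ℤ) where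
  toFun x := (fun i => ((x ⟨i.1 + 1, by omega⟩ : ℤ) : ZMod (p ^ a)), ∑ k, x k)
  map_add' x y := by
    ext i
    · simp [Int.cast_add]
    · simp [Finset.sum_add_distrib]
  map_smul' z x := by
    ext i
    · simp [Int.cast_mul, zsmul_eq_mul]
    · simp [Finset.mul_sum, zsmul_eq_mul]

end KneserProof



namespace KneserProof

open Submodule

lemma int_coprime_of_not_dvd {p : ℕ} (hp : p.Prime) {u : ℤ} (h : ¬ (p : ℤ) ∣ u) :
    IsCoprime u (p : ℤ) :=
  ((Nat.prime_iff_prime_int.mp hp).coprime_iff_not_dvd.mpr h).symm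

/-- Transfer 1: coker(2L) vs coker(L). -/
lemma transfer1 (n p : ℕ) [Fact p.Prime] (hp : 3 < p) :
    Nonempty (AddCommGroup.primaryComponent
        ((KneserVertex n → ℤ) ⧸ LinearMap.range (Matrix.mulVecLin (L2 n))) p ≃+
      AddCommGroup.primaryComponent (KneserCokernel n) p) := by
  have hprime : p.Prime := Fact.out
  set RL2 := LinearMap.range (Matrix.mulVecLin (L2 n)) with hRL2
  set RL := LinearMap.range (Matrix.mulVecLin (kneserLaplacian n)) with hRL
  have hmem : ∀ v : KneserVertex n → ℤ, Matrix.mulVecLin (L2 n) v ∈ RL := by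
    intro v
    refine ⟨(2 : ℤ) • v, ?_⟩
    rw [LinearMap.map_smul, Matrix.mulVecLin_apply, Matrix.mulVecLin_apply, L2,
      Matrix.smul_mulVec]
  have hle : RL2 ≤ LinearMap.ker (Submodule.mkQ RL) := by
    rintro x ⟨v, rfl⟩
    rw [LinearMap.mem_ker, Submodule.mkQ_apply, Submodule.Quotient.mk_eq_zero]
    exact hmem v
  let ψ : ((KneserVertex n → ℤ) ⧸ RL2) →ₗ[ℤ] KneserCokernel n :=
    Submodule.liftQ RL2 (Submodule.mkQ RL) hle
  have hcop : IsCoprime (2 : ℤ) (p : ℤ) :=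
    int_coprime_of_not_dvd hprime (by
      intro hd
      have := Int.le_of_dvd (by norm_num) hd
      omega)
  have happ : ∀ y : KneserVertex n → ℤ,
      ψ.toAddMonoidHom (Submodule.Quotient.mk y) = Submodule.Quotient.mk y := fun _ => rfl
  apply primaryEquiv_transfer p 2 hcop ψ.toAddMonoidHom
  · intro aq hq
    obtain ⟨x, rfl⟩ := Submodule.Quotient.mk_surjective RL2 aq
    have hx : x ∈ RL := by
      rw [happ x, Submodule.Quotient.mk_eq_zero] at hq
      exact hq
    obtain ⟨v, hv⟩ := hx
    show (2 : ℤ) • Submodule.Quotient.mk x = (0 : (KneserVertex n → ℤ) ⧸ RL2)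
    rw [← Submodule.Quotient.mk_smul, Submodule.Quotient.mk_eq_zero]
    refine ⟨v, ?_⟩
    rw [Matrix.mulVecLin_apply, L2, Matrix.smul_mulVec, ← Matrix.mulVecLin_apply, hv]
  · intro b _
    obtain ⟨x, rfl⟩ := Submodule.Quotient.mk_surjective RL b
    refine ⟨Submodule.Quotient.mk ((2 : ℤ) • x), ?_⟩
    rw [happ, Submodule.Quotient.mk_smul]

end KneserProof

namespace KneserProof

/-- Transfer 2: coker(Q2) vs coker(L2), via the injection Nᵀ. -/
lemma transfer2 (n p : ℕ) [Fact p.Prime] (hp : 3 < p) (hn : 5 ≤ n)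
    (hd3 : (p : ℤ) ∣ (n : ℤ) - 3) :
    Nonempty (AddCommGroup.primaryComponent
        ((Fin n → ℤ) ⧸ LinearMap.range (Matrix.mulVecLin (Q2 n))) p ≃+
      AddCommGroup.primaryComponent
        ((KneserVertex n → ℤ) ⧸ LinearMap.range (Matrix.mulVecLin (L2 n))) p) := by
  have hprime : p.Prime := Fact.out
  set RQ := LinearMap.range (Matrix.mulVecLin (Q2 n)) with hRQ
  set RL2 := LinearMap.range (Matrix.mulVecLin (L2 n)) with hRL2
  have hNQ := NQ_eq n hn
  have hNC : NT n * C2 n = L2 n - u2 n • 1 := by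
    rw [identity_one n hn]; abel
  have hle : RQ ≤ LinearMap.ker ((Submodule.mkQ RL2) ∘ₗ Matrix.mulVecLin (NT n)) := by
    rintro x ⟨y, rfl⟩
    rw [LinearMap.mem_ker, LinearMap.comp_apply, Submodule.mkQ_apply,
      Submodule.Quotient.mk_eq_zero]
    refine ⟨NT n *ᵥ y, ?_⟩
    rw [Matrix.mulVecLin_apply, Matrix.mulVecLin_apply, Matrix.mulVecLin_apply,
      Matrix.mulVec_mulVec, Matrix.mulVec_mulVec, hNQ]
  let ψ : ((Fin n → ℤ) ⧸ RQ) →ₗ[ℤ] ((KneserVertex n → ℤ) ⧸ RL2) :=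
    Submodule.liftQ RQ ((Submodule.mkQ RL2) ∘ₗ Matrix.mulVecLin (NT n)) hle
  have happ : ∀ y : Fin n → ℤ,
      ψ.toAddMonoidHom (Submodule.Quotient.mk y) = Submodule.Quotient.mk (NT n *ᵥ y) :=
    fun _ => rfl
  have hcop : IsCoprime (u2 n) (p : ℤ) := by
    apply int_coprime_of_not_dvd hprime
    intro hdvd
    rcases ((Nat.prime_iff_prime_int.mp hprime).dvd_mul).mp hdvd with h | h
    · have h2 : (p : ℤ) ∣ 2 := by
        have := Int.dvd_sub h hd3
        have he : (n : ℤ) - 1 - ((n : ℤ) - 3) = 2 := by ring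
        rwa [he] at this
      have := Int.le_of_dvd (by norm_num) h2
      omega
    · have h1 : (p : ℤ) ∣ 1 := by
        have := Int.dvd_sub hd3 h
        have he : (n : ℤ) - 3 - ((n : ℤ) - 4) = 1 := by ring
        rwa [he] at this
      have := Int.le_of_dvd (by norm_num) h1
      omega
  apply primaryEquiv_transfer p (u2 n) hcop ψ.toAddMonoidHom
  · intro aq hq
    obtain ⟨x, rfl⟩ := Submodule.Quotient.mk_surjective RQ aq
    rw [happ x, Submodule.Quotient.mk_eq_zero] at hq
    obtain ⟨v, hv⟩ := hq
    rw [Matrix.mulVecLin_apply] at hv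
    -- key computation : u2 • x = Q2 *ᵥ (x - C2 *ᵥ v)
    have hkey : u2 n • x = Q2 n *ᵥ (x - C2 n *ᵥ v) := by
      have hNw : NT n *ᵥ (x - C2 n *ᵥ v) = u2 n • v := by
        rw [Matrix.mulVec_sub, Matrix.mulVec_mulVec, hNC, Matrix.sub_mulVec,
          Matrix.smul_mulVec, Matrix.one_mulVec, hv]
        abel
      have h1 : NT n *ᵥ (u2 n • x - Q2 n *ᵥ (x - C2 n *ᵥ v)) = 0 := by
        rw [Matrix.mulVec_sub, Matrix.mulVec_mulVec, hNQ, ← Matrix.mulVec_mulVec,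
          hNw, Matrix.mulVec_smul, Matrix.mulVec_smul, hv]
        abel
      have h2 := NT_ker n hn _ h1
      have h3 : u2 n • x - Q2 n *ᵥ (x - C2 n *ᵥ v) = 0 := h2
      linear_combination (norm := module) h3
    show u2 n • Submodule.Quotient.mk x = (0 : (Fin n → ℤ) ⧸ RQ)
    rw [← Submodule.Quotient.mk_smul, Submodule.Quotient.mk_eq_zero, hkey]
    exact ⟨x - C2 n *ᵥ v, Matrix.mulVecLin_apply _ _⟩
  · intro b _
    obtain ⟨v, rfl⟩ := Submodule.Quotient.mk_surjective RL2 b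
    refine ⟨Submodule.Quotient.mk (-(C2 n *ᵥ v)), ?_⟩
    rw [happ]
    have hL2v : (Submodule.Quotient.mk (L2 n *ᵥ v) : (KneserVertex n → ℤ) ⧸ RL2) = 0 := by
      rw [Submodule.Quotient.mk_eq_zero]
      exact ⟨v, Matrix.mulVecLin_apply _ _⟩
    have hNv : NT n *ᵥ (-(C2 n *ᵥ v)) = u2 n • v - L2 n *ᵥ v := by
      rw [Matrix.mulVec_neg, Matrix.mulVec_mulVec, hNC, Matrix.sub_mulVec,
        Matrix.smul_mulVec, Matrix.one_mulVec]
      abel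
    rw [hNv, ← Submodule.Quotient.mk_smul]
    calc (Submodule.Quotient.mk (u2 n • v - L2 n *ᵥ v) : (KneserVertex n → ℤ) ⧸ RL2)
        = Submodule.Quotient.mk (u2 n • v) - Submodule.Quotient.mk (L2 n *ᵥ v) := by
          rw [Submodule.Quotient.mk_sub]
      _ = Submodule.Quotient.mk (u2 n • v) := by rw [hL2v, sub_zero]

end KneserProof

namespace KneserProof

/-- Transfer 3: coker(Q2) vs the explicit group. -/
lemma transfer3 (n p a : ℕ) (s : ℕ) [Fact p.Prime] (hp : 3 < p) (hn : 5 ≤ n)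
    (hsZ : (n : ℤ) - 3 = (p : ℤ) ^ a * (s : ℤ))
    (hps : ¬ (p : ℤ) ∣ (s : ℤ)) (hpn : ¬ (p : ℤ) ∣ (n : ℤ)) :
    Nonempty (AddCommGroup.primaryComponent
        ((Fin n → ℤ) ⧸ LinearMap.range (Matrix.mulVecLin (Q2 n))) p ≃+
      AddCommGroup.primaryComponent ((Fin (n - 1) → ZMod (p ^ a)) × ℤ) p) := by
  classical
  have hprime : p.Prime := Fact.out
  haveI : NeZero (p ^ a) := ⟨pow_ne_zero a hprime.pos.ne'⟩
  set RQ := LinearMap.range (Matrix.mulVecLin (Q2 n)) with hRQ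
  have hpa0 : ((p : ℤ) ^ a) ≠ 0 := pow_ne_zero a (by exact_mod_cast hprime.pos.ne')
  have hcastpa : (((p ^ a : ℕ) : ℤ)) = (p : ℤ) ^ a := by push_cast; rfl
  -- the cast of (n-3) to ZMod (p^a) is zero
  have hz3 : (((n : ℤ) - 3 : ℤ) : ZMod (p ^ a)) = 0 := by
    rw [ZMod.intCast_zmod_eq_zero_iff_dvd, hcastpa, hsZ]
    exact Dvd.intro _ rfl
  -- well-definedness
  have hle : RQ ≤ LinearMap.ker (phi n p a) := by
    rintro x ⟨y, rfl⟩
    rw [LinearMap.mem_ker, Matrix.mulVecLin_apply]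
    have h1 : ∀ j : Fin n, ((((Q2 n *ᵥ y) j : ℤ)) : ZMod (p ^ a)) = 0 := by
      intro j
      rw [Q2_mulVec, Int.cast_mul, hz3, zero_mul]
    have h2 : ∑ j, (Q2 n *ᵥ y) j = 0 := by
      have : ∀ j : Fin n, (Q2 n *ᵥ y) j
          = ((n : ℤ) - 3) * ((n : ℤ) * y j - ∑ k, y k) := fun j => Q2_mulVec n y j
      rw [Finset.sum_congr rfl (fun j _ => this j)]
      rw [← Finset.mul_sum, Finset.sum_sub_distrib, ← Finset.mul_sum,
        Finset.sum_const, Finset.card_univ, Fintype.card_fin, nsmul_eq_mul]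
      ring
    have : phi n p a (Q2 n *ᵥ y) = (fun i => (0 : ZMod (p ^ a)), ∑ j, (Q2 n *ᵥ y) j) := by
      unfold phi
      simp only [LinearMap.coe_mk, AddHom.coe_mk]
      exact Prod.ext (funext fun i => h1 _) rfl
    rw [this, h2]
    rfl
  let ψ : ((Fin n → ℤ) ⧸ RQ) →ₗ[ℤ] ((Fin (n - 1) → ZMod (p ^ a)) × ℤ) :=
    Submodule.liftQ RQ (phi n p a) hle
  have happ : ∀ y : Fin n → ℤ,
      ψ.toAddMonoidHom (Submodule.Quotient.mk y) = phi n p a y := fun _ => rfl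
  have hcop : IsCoprime ((s : ℤ) * (n : ℤ)) (p : ℤ) := by
    apply int_coprime_of_not_dvd hprime
    intro hdvd
    rcases ((Nat.prime_iff_prime_int.mp hprime).dvd_mul).mp hdvd with h | h
    · exact hps h
    · exact hpn h
  apply primaryEquiv_transfer p ((s : ℤ) * (n : ℤ)) hcop ψ.toAddMonoidHom
  · intro aq hq
    obtain ⟨x, rfl⟩ := Submodule.Quotient.mk_surjective RQ aq
    rw [happ x] at hq
    have hfst : ∀ i : Fin (n - 1),
        (((x ⟨i.1 + 1, by omega⟩ : ℤ)) : ZMod (p ^ a)) = 0 := by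
      intro i
      have := congrFun (congrArg Prod.fst hq) i
      exact this
    have hsnd : ∑ k, x k = 0 := congrArg Prod.snd hq
    have hdiv1 : ∀ j : Fin n, j.1 ≠ 0 → ((p : ℤ) ^ a) ∣ x j := by
      intro j hj
      have hi := hfst ⟨j.1 - 1, by omega⟩
      have hidx : (⟨(j.1 - 1) + 1, by omega⟩ : Fin n) = j := Fin.ext (by simp; omega)
      rw [hidx] at hi
      rw [← hcastpa]
      exact (ZMod.intCast_zmod_eq_zero_iff_dvd _ _).mp hi
    have hdiv : ∀ j : Fin n, ((p : ℤ) ^ a) ∣ x j := by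
      intro j
      by_cases hj : j.1 = 0
      · have hxj : x j = - ∑ k ∈ Finset.univ.erase j, x k := by
          have h := hsnd
          rw [← Finset.add_sum_erase _ _ (Finset.mem_univ j)] at h
          linarith
        rw [hxj, dvd_neg]
        apply Finset.dvd_sum
        intro k hk
        apply hdiv1
        intro hk0
        exact (Finset.ne_of_mem_erase hk) (Fin.ext (by omega))
      · exact hdiv1 j hj
    choose c hc using hdiv
    have hsumc : ∑ k, c k = 0 := by
      have h1 : (p : ℤ) ^ a * ∑ k, c k = 0 := by
        rw [Finset.mul_sum, ← hsnd]
        exact Finset.sum_congr rfl (fun k _ => (hc k).symm)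
      rcases mul_eq_zero.mp h1 with h | h
      · exact absurd h hpa0
      · exact h
    show ((s : ℤ) * (n : ℤ)) • Submodule.Quotient.mk x = (0 : (Fin n → ℤ) ⧸ RQ)
    rw [← Submodule.Quotient.mk_smul, Submodule.Quotient.mk_eq_zero]
    refine ⟨c, ?_⟩
    rw [Matrix.mulVecLin_apply]
    funext j
    have : (Q2 n *ᵥ c) j = ((n : ℤ) - 3) * ((n : ℤ) * c j - ∑ k, c k) := Q2_mulVec n c j
    rw [this, hsumc, hsZ]
    show (p : ℤ) ^ a * (s : ℤ) * ((n : ℤ) * c j - 0) = (s : ℤ) * (n : ℤ) * x j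
    rw [hc j]
    ring
  · intro b hb
    obtain ⟨v, z⟩ := b
    obtain ⟨k, hk⟩ := hb
    have hz : z = 0 := by
      have h2 := congrArg Prod.snd hk
      have h3 : (p : ℤ) ^ k * z = 0 := by
        simpa [zsmul_eq_mul] using h2
      rcases mul_eq_zero.mp h3 with h | h
      · exact absurd h (pow_ne_zero k (by exact_mod_cast hprime.pos.ne'))
      · exact h
    subst hz
    set T : ℤ := ∑ i : Fin (n - 1), ((v i).val : ℤ) with hT
    set x : Fin n → ℤ := fun j =>
      if j.1 = 0 then -T else ((v ⟨j.1 - 1, by omega⟩).val : ℤ) with hx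
    have hphix : phi n p a x = (v, 0) := by
      have hfst : ∀ i : Fin (n - 1),
          ((x ⟨i.1 + 1, by omega⟩ : ℤ) : ZMod (p ^ a)) = v i := by
        intro i
        have hne : (⟨i.1 + 1, by omega⟩ : Fin n).1 ≠ 0 := Nat.succ_ne_zero i.1
        have hvv : (v ⟨(⟨i.1 + 1, by omega⟩ : Fin n).1 - 1, by omega⟩) = v i :=
          congrArg v (Fin.ext rfl)
        simp only [hx]
        rw [if_neg hne, hvv]
        push_cast
        exact ZMod.natCast_rightInverse (v i)
      have hsnd : ∑ j, x j = 0 := by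
        have hn1 : n - 1 + 1 = n := by omega
        have hre : ∑ j : Fin n, x j = ∑ j : Fin (n - 1 + 1), x (Fin.cast hn1 j) :=
          (Fintype.sum_equiv (finCongr hn1) _ _ (fun j => rfl)).symm
        have h0 : x (Fin.cast hn1 0) = -T := by
          simp only [hx]
          exact if_pos rfl
        have hsucc : ∀ i : Fin (n - 1), x (Fin.cast hn1 i.succ) = ((v i).val : ℤ) := by
          intro i
          have hne : (Fin.cast hn1 i.succ).1 ≠ 0 := Nat.succ_ne_zero i.1
          have hvv : (v ⟨(Fin.cast hn1 i.succ).1 - 1, by omega⟩) = v i :=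
            congrArg v (Fin.ext rfl)
          simp only [hx]
          rw [if_neg hne, hvv]
        rw [hre, Fin.sum_univ_succ, h0, Finset.sum_congr rfl (fun i _ => hsucc i), ← hT]
        ring
      unfold phi
      simp only [LinearMap.coe_mk, AddHom.coe_mk]
      exact Prod.ext (funext fun i => hfst i) hsnd
    refine ⟨((s : ℤ) * (n : ℤ)) • Submodule.Quotient.mk x, ?_⟩
    rw [map_zsmul, happ x, hphix]
  
end KneserProof

theorem kneser_sylow_p_dvd_n_sub_three (n p a : ℕ) [Fact p.Prime] (hn : 5 ≤ n) (hp : 3 < p)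
    (ha : 1 ≤ a) (hdvd : p ^ a ∣ n - 3) (hndvd : ¬ p ^ (a + 1) ∣ n - 3) :
    Nonempty ((AddCommGroup.primaryComponent (criticalGroup n) p) ≃+
      (Fin (n - 1) → ZMod (p ^ a))) := by
  classical
  have hprime : p.Prime := Fact.out
  haveI : NeZero (p ^ a) := ⟨pow_ne_zero a hprime.pos.ne'⟩
  obtain ⟨s, hs⟩ := hdvd
  have hsZ : (n : ℤ) - 3 = (p : ℤ) ^ a * (s : ℤ) := by
    have h3 : 3 ≤ n := by omega
    have := congrArg (fun k : ℕ => (k : ℤ)) hs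
    push_cast at this
    omega
  have hpsN : ¬ p ∣ s := by
    intro hd
    obtain ⟨t, ht⟩ := hd
    exact hndvd ⟨t, by rw [hs, ht, pow_succ]; ring⟩
  have hps : ¬ (p : ℤ) ∣ (s : ℤ) := fun h => hpsN (Int.ofNat_dvd.mp h)
  have hpd3 : (p : ℤ) ∣ (n : ℤ) - 3 := by
    rw [hsZ]
    exact Dvd.dvd.mul_right (dvd_pow_self _ (by omega)) _
  have hpn : ¬ (p : ℤ) ∣ (n : ℤ) := by
    intro h
    have h3 : (p : ℤ) ∣ 3 := by
      have := Int.dvd_sub h hpd3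
      have he : (n : ℤ) - ((n : ℤ) - 3) = 3 := by ring
      rwa [he] at this
    have := Int.le_of_dvd (by norm_num) h3
    omega
  -- Step 0 : primary component of the critical group vs that of the cokernel
  have T0 : Nonempty ((AddCommGroup.primaryComponent (criticalGroup n) p) ≃+
      (AddCommGroup.primaryComponent (KneserCokernel n) p)) := by
    apply primaryEquiv_transfer p 1 isCoprime_one_left ((criticalGroup n).subtype)
    · intro x hx
      rw [one_smul]
      exact Subtype.ext hx
    · intro b hb
      obtain ⟨k, hk⟩ := hb
      have hfin : IsOfFinAddOrder b := by
        rw [isOfFinAddOrder_iff_nsmul_eq_zero]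
        refine ⟨p ^ k, pow_pos hprime.pos k, ?_⟩
        have : ((p ^ k : ℕ) : ℤ) • b = 0 := by
          push_cast
          exact hk
        rwa [natCast_zsmul] at this
      have hmem : b ∈ criticalGroup n := hfin
      exact ⟨⟨b, hmem⟩, by rw [one_smul]; rfl⟩
  -- Step 6 : primary component of the product vs the function group
  have T6 : Nonempty ((AddCommGroup.primaryComponent (Fin (n - 1) → ZMod (p ^ a)) p) ≃+
      (AddCommGroup.primaryComponent ((Fin (n - 1) → ZMod (p ^ a)) × ℤ) p)) := by
    apply primaryEquiv_transfer p 1 isCoprime_one_left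
      (AddMonoidHom.inl (Fin (n - 1) → ZMod (p ^ a)) ℤ)
    · intro v hv
      rw [one_smul]
      exact congrArg Prod.fst hv
    · rintro ⟨v, z⟩ ⟨k, hk⟩
      have h2 := congrArg Prod.snd hk
      have h3 : (p : ℤ) ^ k * z = 0 := by
        simpa [zsmul_eq_mul] using h2
      have hz : z = 0 := by
        rcases mul_eq_zero.mp h3 with h | h
        · exact absurd h (pow_ne_zero k (by exact_mod_cast hprime.pos.ne'))
        · exact h
      exact ⟨v, by rw [one_smul, hz]; rfl⟩
  -- the function group is all p-primary
  have hall : ∀ g : Fin (n - 1) → ZMod (p ^ a),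
      g ∈ AddCommGroup.primaryComponent (Fin (n - 1) → ZMod (p ^ a)) p := by
    intro g
    apply mem_primary_of_pow_smul (k := a)
    funext i
    show (p : ℤ) ^ a • g i = 0
    rw [zsmul_eq_mul]
    have hc : (((p : ℤ) ^ a : ℤ) : ZMod (p ^ a)) = 0 := by
      rw [Int.cast_pow, Int.cast_natCast, ← Nat.cast_pow, ZMod.natCast_self]
    rw [hc, zero_mul]
  let e7 : (AddCommGroup.primaryComponent (Fin (n - 1) → ZMod (p ^ a)) p) ≃+
      (Fin (n - 1) → ZMod (p ^ a)) :=
    { toFun := fun g => g.1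
      invFun := fun g => ⟨g, hall g⟩
      left_inv := fun _ => Subtype.ext rfl
      right_inv := fun _ => rfl
      map_add' := fun _ _ => rfl }
  obtain ⟨e0⟩ := T0
  obtain ⟨e1⟩ := KneserProof.transfer1 n p hp
  obtain ⟨e2⟩ := KneserProof.transfer2 n p hp hn hpd3
  obtain ⟨e3⟩ := KneserProof.transfer3 n p a s hp hn hsZ hps hpn
  obtain ⟨e6⟩ := T6
  exact ⟨e0.trans (e1.symm.trans (e2.symm.trans (e3.trans (e6.symm.trans e7))))⟩
end

section
/- Let n ≥ 5 with n ≡ 2 (mod 4). Then the critical group K(KG(n,2)) has odd order; that is, 2 does not divide the cardinality of the torsion subgroup of ℤ^V / im(L), where L is the Laplacian of KG(n,2). -/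
open Finset

lemma kv_filter_both (n : ℕ) (u : KneserVertex n) (a b : Fin n) (hab : a ≠ b) (hu : u.1 = {a, b}) :
    Finset.univ.filter (fun v : KneserVertex n => a ∈ v.1 ∧ b ∈ v.1) = {u} := by
  ext v
  simp only [mem_filter, mem_univ, true_and, mem_singleton]
  constructor
  · rintro ⟨ha, hb⟩
    have hsub : ({a, b} : Finset (Fin n)) ⊆ v.1 := by
      intro x hx; simp only [mem_insert, mem_singleton] at hx; rcases hx with rfl | rfl <;> assumption
    have : v.1 = {a, b} := by
      refine (Finset.eq_of_subset_of_card_le hsub ?_).symm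
      rw [v.2, Finset.card_pair hab]
    exact Subtype.ext (this.trans hu.symm)
  · rintro rfl
    constructor <;> (rw [hu]; simp)

lemma kneser_mod2_kernel (n : ℕ) (hn2 : 2 ∣ n) (hn1 : 1 ≤ n) (y : KneserVertex n → ZMod 2)
    (hy : ∀ u : KneserVertex n,
      ∑ v ∈ Finset.univ.filter (fun v : KneserVertex n => Disjoint u.1 v.1), y v = 0) :
    ∀ u : KneserVertex n, y u = ∑ v, y v := by
  classical
  set S : ZMod 2 := ∑ v, y v with hS
  set r : Fin n → ZMod 2 := fun i => ∑ v ∈ Finset.univ.filter (fun v : KneserVertex n => i ∈ v.1), y v with hr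
  set R : ZMod 2 := ∑ i, r i with hR
  have h2 : ∀ z : ZMod 2, z + z = 0 := fun z => by
    have : (2 : ZMod 2) = 0 := by decide
    calc z + z = 2 * z := by ring
    _ = 0 := by rw [this, zero_mul]
  -- Step A
  have hA : ∀ (u : KneserVertex n) (a b : Fin n), a ≠ b → u.1 = {a, b} →
      y u = S + r a + r b := by
    intro u a b hab hu
    have hsplit : S = ∑ v ∈ Finset.univ.filter (fun v : KneserVertex n => ¬ Disjoint u.1 v.1), y v := by
      rw [hS, ← Finset.sum_filter_add_sum_filter_not Finset.univ
        (fun v : KneserVertex n => Disjoint u.1 v.1) y, hy u, zero_add]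
    have hmeet : (Finset.univ.filter (fun v : KneserVertex n => ¬ Disjoint u.1 v.1))
        = Finset.univ.filter (fun v : KneserVertex n => a ∈ v.1 ∨ b ∈ v.1) := by
      apply Finset.filter_congr
      intro v _
      rw [hu]
      simp only [Finset.disjoint_insert_left, Finset.disjoint_singleton_left]
      tauto
    have hIE : (∑ v ∈ Finset.univ.filter (fun v : KneserVertex n => a ∈ v.1 ∨ b ∈ v.1), y v)
        + y u = r a + r b := by
      have hunion : Finset.univ.filter (fun v : KneserVertex n => a ∈ v.1 ∨ b ∈ v.1)
          = (Finset.univ.filter (fun v : KneserVertex n => a ∈ v.1))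
            ∪ (Finset.univ.filter (fun v : KneserVertex n => b ∈ v.1)) := Finset.filter_or _ _ _
      have hinter2 : (Finset.univ.filter (fun v : KneserVertex n => a ∈ v.1))
          ∩ (Finset.univ.filter (fun v : KneserVertex n => b ∈ v.1))
          = ({u} : Finset (KneserVertex n)) := by
        rw [← Finset.filter_and]; exact kv_filter_both n u a b hab hu
      have := Finset.sum_union_inter (s₁ := Finset.univ.filter (fun v : KneserVertex n => a ∈ v.1))
        (s₂ := Finset.univ.filter (fun v : KneserVertex n => b ∈ v.1)) (f := y)
      rw [hunion, hinter2, Finset.sum_singleton] at *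
      rw [this]
    rw [hmeet] at hsplit
    linear_combination (hsplit + hIE) - h2 S - (hIE - hIE)
  -- Step B
  have hcastn1 : ((n - 1 : ℕ) : ZMod 2) = 1 := by
    have h : n - 1 = 2 * ((n - 1) / 2) + 1 := by omega
    rw [h]
    push_cast
    have h20 : (2 : ZMod 2) = 0 := by decide
    rw [h20]
    ring
  have hB : ∀ a : Fin n, r a = S + R := by
    intro a
    have key : ∀ v : KneserVertex n, a ∈ v.1 → ((v.1.erase a).Nonempty) := by
      intro v hv
      rw [← Finset.card_pos, Finset.card_erase_of_mem hv, v.2]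
      norm_num
    have hbij : r a = ∑ b ∈ (Finset.univ.erase a).attach,
        y ⟨{a, b.1}, by rw [Finset.card_pair (Finset.ne_of_mem_erase b.2).symm]⟩ := by
      refine Finset.sum_bij'
        (fun v hv => (⟨(v.1.erase a).min' (key v (by simpa using (Finset.mem_filter.mp hv).2)), by
          have hm := Finset.min'_mem (v.1.erase a) (key v (by simpa using (Finset.mem_filter.mp hv).2))
          exact Finset.mem_erase.mpr ⟨(Finset.mem_erase.mp hm).1, Finset.mem_univ _⟩⟩ :
            {x // x ∈ Finset.univ.erase a}))
        (fun b _ => ⟨{a, b.1}, by rw [Finset.card_pair (Finset.ne_of_mem_erase b.2).symm]⟩)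
        (fun v hv => Finset.mem_attach _ _)
        (fun b _ => by simp)
        (fun v hv => ?_) (fun b _ => ?_) (fun v hv => ?_)
      · -- j (i v) = v
        have hav : a ∈ v.1 := by simpa using (Finset.mem_filter.mp hv).2
        have hm := Finset.min'_mem (v.1.erase a) (key v hav)
        obtain ⟨hne, hmem⟩ := Finset.mem_erase.mp hm
        apply Subtype.ext
        show ({a, (v.1.erase a).min' (key v hav)} : Finset (Fin n)) = v.1
        refine Finset.eq_of_subset_of_card_le ?_ ?_
        · intro x hx
          rcases Finset.mem_insert.mp hx with rfl | hx'
          · exact hav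
          · rw [Finset.mem_singleton] at hx'
            subst hx'
            exact hmem
        · rw [v.2, Finset.card_pair (Ne.symm hne)]
      · -- i (j b) = b
        apply Subtype.ext
        have hab : a ∉ ({b.1} : Finset (Fin n)) := by
          simp [(Finset.ne_of_mem_erase b.2).symm]
        have hne2 : (({a, b.1} : Finset (Fin n)).erase a).Nonempty := by
          rw [Finset.erase_insert hab]
          exact ⟨b.1, Finset.mem_singleton_self _⟩
        show ((({a, b.1} : Finset (Fin n)).erase a).min' hne2) = b.1
        have : (({a, b.1} : Finset (Fin n)).erase a) = {b.1} := Finset.erase_insert hab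
        simp only [this]
        exact Finset.min'_singleton _
      · -- values
        have hav : a ∈ v.1 := by simpa using (Finset.mem_filter.mp hv).2
        have hm := Finset.min'_mem (v.1.erase a) (key v hav)
        obtain ⟨hne, hmem⟩ := Finset.mem_erase.mp hm
        congr 1
        apply Subtype.ext
        show v.1 = ({a, (v.1.erase a).min' (key v hav)} : Finset (Fin n))
        refine (Finset.eq_of_subset_of_card_le ?_ ?_).symm
        · intro x hx
          rcases Finset.mem_insert.mp hx with rfl | hx'
          · exact hav
          · rw [Finset.mem_singleton] at hx'
            subst hx'
            exact hmem
        · rw [v.2, Finset.card_pair (Ne.symm hne)]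
    have hval : ∀ b : {x // x ∈ Finset.univ.erase a},
        y ⟨{a, b.1}, by rw [Finset.card_pair (Finset.ne_of_mem_erase b.2).symm]⟩
          = S + r a + r b.1 :=
      fun b => hA _ a b.1 (Finset.ne_of_mem_erase b.2).symm rfl
    rw [Finset.sum_congr rfl (fun b _ => hval b)] at hbij
    rw [Finset.sum_add_distrib, Finset.sum_const, Finset.card_attach,
      Finset.card_erase_of_mem (Finset.mem_univ a), Finset.card_univ, Fintype.card_fin,
      nsmul_eq_mul, hcastn1, one_mul] at hbij
    have hattach : ∑ b ∈ (Finset.univ.erase a).attach, r b.1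
        = ∑ b ∈ Finset.univ.erase a, r b := Finset.sum_attach _ _
    have hpart : (∑ b ∈ Finset.univ.erase a, r b) + r a = R :=
      Finset.sum_erase_add Finset.univ r (Finset.mem_univ a)
    rw [hattach] at hbij
    linear_combination hbij + hpart
  -- Step C
  intro u
  obtain ⟨a, b, hab, hu⟩ := Finset.card_eq_two.mp u.2
  have := hA u a b hab hu
  rw [this, hB a, hB b]
  linear_combination h2 S + h2 R


lemma kneser_degree_eq (n : ℕ) (u : KneserVertex n) :
    (kneserGraph2 n).degree u = (n - 2).choose 2 := by
  classical
  rw [← SimpleGraph.card_neighborFinset_eq_degree, SimpleGraph.neighborFinset_eq_filter]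
  have : (Finset.univ.filter (fun v : KneserVertex n => (kneserGraph2 n).Adj u v)).card
      = ((u.1ᶜ).powersetCard 2).card := by
    refine Finset.card_bij' (fun v _ => v.1) (fun s hs => ⟨s, (Finset.mem_powersetCard.mp hs).2⟩)
      ?_ ?_ ?_ ?_
    · intro v hv
      have hadj : Disjoint u.1 v.1 := (Finset.mem_filter.mp hv).2
      rw [Finset.mem_powersetCard]
      exact ⟨fun x hx => Finset.mem_compl.mpr (Finset.disjoint_right.mp hadj hx), v.2⟩
    · intro s hs
      rw [Finset.mem_filter]
      refine ⟨Finset.mem_univ _, ?_⟩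
      show Disjoint u.1 s
      rw [Finset.disjoint_right]
      intro x hx
      exact Finset.mem_compl.mp ((Finset.mem_powersetCard.mp hs).1 hx)
    · intro v _; rfl
    · intro s _; rfl
  rw [this, Finset.card_powersetCard, Finset.card_compl, u.2, Fintype.card_fin]

lemma kneser_degree_even (n : ℕ) (hmod : n % 4 = 2) (u : KneserVertex n) :
    2 ∣ (kneserGraph2 n).degree u := by
  rw [kneser_degree_eq]
  obtain ⟨k, hk⟩ : ∃ k, n - 2 = 4 * k := ⟨n / 4, by omega⟩
  rw [Nat.choose_two_right, hk]
  obtain ⟨m, hm⟩ : ∃ m, 4 * k - 1 = m := ⟨_, rfl⟩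
  rw [hm, show 4 * k * m = 2 * (2 * k * m) by ring, Nat.mul_div_cancel_left _ (by norm_num)]
  exact ⟨k * m, by ring⟩

lemma kneser_lap_map (n : ℕ) :
    (SimpleGraph.lapMatrix ℤ (kneserGraph2 n)).map (Int.cast : ℤ → ZMod 2)
      = SimpleGraph.lapMatrix (ZMod 2) (kneserGraph2 n) := by
  ext i j
  simp only [Matrix.map_apply, SimpleGraph.lapMatrix, Matrix.sub_apply, Int.cast_sub,
    SimpleGraph.degMatrix, Matrix.diagonal_apply, SimpleGraph.adjMatrix_apply,
    apply_ite (Int.cast : ℤ → ZMod 2), Int.cast_natCast, Int.cast_one, Int.cast_zero]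

lemma zmod2_add_self : ∀ z : ZMod 2, z + z = 0 := by decide

lemma zmod2_two_eq_zero : (2 : ZMod 2) = 0 := by decide

theorem kneser_critical_group_odd_order_two_mod_four (n : ℕ) (hn : 5 ≤ n)
    (hmod : n % 4 = 2) :
    ¬ 2 ∣ Nat.card (criticalGroup n) := by
  intro hdvd
  classical
  have hfin : Finite (criticalGroup n) := by
    have h3 : Finite (Submodule.torsion ℤ (KneserCokernel n)) :=
      Module.finite_of_fg_torsion _ (Submodule.torsion_isTorsion)
    rw [criticalGroup, ← Submodule.torsion_int]
    exact h3
  haveI : Fact (Nat.Prime 2) := ⟨Nat.prime_two⟩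
  obtain ⟨g, hg⟩ := exists_prime_addOrderOf_dvd_card' (G := criticalGroup n) 2 hdvd
  have hgne : g ≠ 0 := by
    intro h
    rw [h, addOrderOf_zero] at hg
    exact absurd hg (by norm_num)
  have hg2 : (2 : ℕ) • (g : KneserCokernel n) = 0 := by
    have : (2 : ℕ) • g = 0 := by
      have h0 := addOrderOf_nsmul_eq_zero g
      rwa [hg] at h0
    calc (2:ℕ) • (g : KneserCokernel n) = (((2:ℕ) • g : criticalGroup n) : KneserCokernel n) := rfl
    _ = 0 := by rw [this]; rfl
  obtain ⟨y, hy⟩ := Submodule.Quotient.mk_surjective _ (g : KneserCokernel n)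
  have h2y : (2 : ℕ) • y ∈ LinearMap.range (Matrix.mulVecLin (kneserLaplacian n)) := by
    rw [← Submodule.Quotient.mk_eq_zero, Submodule.Quotient.mk_smul, hy]
    exact hg2
  obtain ⟨x, hx⟩ := h2y
  rw [Matrix.mulVecLin_apply] at hx
  -- reduce mod 2
  set xb : KneserVertex n → ZMod 2 := fun v => ((x v : ℤ) : ZMod 2) with hxb
  have hker : ∀ u : KneserVertex n,
      ((SimpleGraph.lapMatrix (ZMod 2) (kneserGraph2 n)).mulVec xb) u = 0 := by
    intro u
    have h1 := (RingHom.map_mulVec (Int.castRingHom (ZMod 2))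
      (SimpleGraph.lapMatrix ℤ (kneserGraph2 n)) x u).symm
    simp only [Int.coe_castRingHom] at h1
    rw [kneser_lap_map] at h1
    have hrhs : ((((SimpleGraph.lapMatrix ℤ (kneserGraph2 n)).mulVec x) u : ℤ) : ZMod 2) = 0 := by
      rw [show SimpleGraph.lapMatrix ℤ (kneserGraph2 n) = kneserLaplacian n from rfl, hx]
      show (((((2:ℕ) • y) u : ℤ)) : ZMod 2) = 0
      rw [Pi.smul_apply]
      simp [zmod2_two_eq_zero]
    rw [hrhs] at h1
    exact h1
  -- the kernel hypothesis of the combinatorial lemma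
  have hhyp : ∀ u : KneserVertex n,
      ∑ v ∈ Finset.univ.filter (fun v : KneserVertex n => Disjoint u.1 v.1), xb v = 0 := by
    intro u
    have h := hker u
    rw [SimpleGraph.lapMatrix_mulVec_apply] at h
    have hdegz : (((kneserGraph2 n).degree u : ℕ) : ZMod 2) = 0 :=
      (ZMod.natCast_eq_zero_iff _ _).mpr (kneser_degree_even n hmod u)
    rw [hdegz, zero_mul, zero_sub, neg_eq_zero, SimpleGraph.neighborFinset_eq_filter] at h
    rw [← h]
    rfl
  have hcore := kneser_mod2_kernel n (by omega) (by omega) xb hhyp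
  -- xb is constant; conclude y is in the range of the Laplacian
  have h01 : (⟨0, by omega⟩ : Fin n) ≠ ⟨1, by omega⟩ := by
    intro h
    exact absurd (congrArg Fin.val h) (by norm_num)
  have v0 : KneserVertex n := ⟨{⟨0, by omega⟩, ⟨1, by omega⟩}, Finset.card_pair h01⟩
  have hdvd2 : ∀ v : KneserVertex n, (2 : ℤ) ∣ (x v - x v0) := by
    intro v
    have hc : ((x v - x v0 : ℤ) : ZMod 2) = 0 := by
      push_cast
      rw [show ((x v : ℤ) : ZMod 2) = xb v from rfl, show ((x v0 : ℤ) : ZMod 2) = xb v0 from rfl,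
        hcore v, hcore v0, sub_self]
    have h := (ZMod.intCast_zmod_eq_zero_iff_dvd (x v - x v0) 2).mp hc
    exact_mod_cast h
  set x' : KneserVertex n → ℤ := fun v => (x v - x v0) / 2 with hx'
  have hxdec : x = (x v0) • (fun _ => (1:ℤ)) + (2:ℤ) • x' := by
    funext v
    simp only [Pi.add_apply, Pi.smul_apply, smul_eq_mul, mul_one, hx']
    rw [Int.mul_ediv_cancel' (hdvd2 v)]
    ring
  have hLx : (kneserLaplacian n).mulVec x = (2:ℤ) • ((kneserLaplacian n).mulVec x') := by
    rw [hxdec, Matrix.mulVec_add, Matrix.mulVec_smul, Matrix.mulVec_smul,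
      kneserLaplacian, SimpleGraph.lapMatrix_mulVec_const_eq_zero, smul_zero, zero_add]
  have hy2 : (2:ℤ) • y = (2:ℤ) • ((kneserLaplacian n).mulVec x') := by
    rw [← hLx, hx]
    norm_num
  have hyrange : y = (kneserLaplacian n).mulVec x' :=
    smul_right_injective (KneserVertex n → ℤ) (by norm_num : (2:ℤ) ≠ 0) hy2
  have hzero : (g : KneserCokernel n) = 0 := by
    rw [← hy, Submodule.Quotient.mk_eq_zero]
    exact ⟨x', by rw [Matrix.mulVecLin_apply, ← hyrange]⟩
  exact hgne (Subtype.ext hzero)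
end

section
/- Let p be a prime, let X be a free module of finite rank over the p-adic integers ℤ_p, and let φ be a ℤ_p-module endomorphism of X. Let φ̃ denote the induced endomorphism of ℚ_p ⊗_{ℤ_p} X. Suppose φ̃ has an eigenvalue u ∈ ℤ whose eigenspace V_u in ℚ_p ⊗ X has dimension b over ℚ_p, and suppose p^a divides u. Let M_a = {x ∈ X : φ(x) ∈ p^a X}. Then the image of M_a in X/pX has dimension at least b as a vector space over the field ℤ/pℤ. -/
open scoped TensorProduct

set_option maxHeartbeats 1000000 in
theorem eigenspace_lower_bound_mod_p (p : ℕ) [Fact p.Prime]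
    (X : Type*) [AddCommGroup X] [Module ℤ_[p] X]
    [Module.Free ℤ_[p] X] [Module.Finite ℤ_[p] X]
    (φ : X →ₗ[ℤ_[p]] X) (u : ℤ) (a b : ℕ)
    (hu : (p : ℤ) ^ a ∣ u)
    (heig : Module.End.HasEigenvalue (LinearMap.baseChange ℚ_[p] φ) ((u : ℚ_[p])))
    (hb : Module.finrank ℚ_[p]
      (Module.End.eigenspace (LinearMap.baseChange ℚ_[p] φ) ((u : ℚ_[p]))) = b) :
    ∃ x : Fin b → X,
      (∀ i, ∃ y : X, φ (x i) = ((p : ℤ_[p]) ^ a) • y) ∧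
      (∀ c : Fin b → ℤ_[p], (∃ y : X, (∑ i, c i • x i) = (p : ℤ_[p]) • y) →
        ∀ i, (p : ℤ_[p]) ∣ c i) := by
  classical
  set E := Module.End.eigenspace (LinearMap.baseChange ℚ_[p] φ) ((u : ℚ_[p])) with hEdef
  let ι : X →ₗ[ℤ_[p]] (ℚ_[p] ⊗[ℤ_[p]] X) := TensorProduct.mk ℤ_[p] ℚ_[p] X 1
  have ι_apply : ∀ x : X, ι x = (1 : ℚ_[p]) ⊗ₜ[ℤ_[p]] x := fun x => rfl
  let bX := Module.Free.chooseBasis ℤ_[p] X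
  have halg : Function.Injective (algebraMap ℤ_[p] ℚ_[p]) :=
    IsFractionRing.injective ℤ_[p] ℚ_[p]
  have hrepr : ∀ (x : X) (i), (bX.baseChange ℚ_[p]).repr (ι x) i
      = algebraMap ℤ_[p] ℚ_[p] (bX.repr x i) := by
    intro x i
    rw [ι_apply, Module.Basis.baseChange_repr_tmul, Algebra.algebraMap_eq_smul_one]
  have hinj : Function.Injective ι := by
    intro x y h
    apply bX.repr.injective
    ext i
    apply halg
    rw [← hrepr, ← hrepr, h]
  have hclear : ∀ v : ℚ_[p] ⊗[ℤ_[p]] X, ∃ (d : ℤ_[p]) (x : X), d ≠ 0 ∧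
      (algebraMap ℤ_[p] ℚ_[p] d) • v = ι x := by
    intro v
    obtain ⟨d, hd⟩ := IsLocalization.exist_integer_multiples_of_finite
      (nonZeroDivisors ℤ_[p]) (fun i => (bX.baseChange ℚ_[p]).repr v i)
    choose c hc using hd
    refine ⟨(d : ℤ_[p]), ∑ i, c i • bX i, nonZeroDivisors.coe_ne_zero d, ?_⟩
    apply (bX.baseChange ℚ_[p]).repr.injective
    ext i
    rw [map_smul, Finsupp.smul_apply, hrepr, congrFun (bX.repr_sum_self c) i, hc i]
    exact algebraMap_smul ℚ_[p] _ _
  set N : Submodule ℤ_[p] X := (E.restrictScalars ℤ_[p]).comap ι with hNdef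
  have hmemN : ∀ x : X, x ∈ N ↔ ι x ∈ E := fun x => Iff.rfl
  set n := Module.finrank ℤ_[p] N with hn
  let bN : Module.Basis (Fin n) ℤ_[p] N := Module.finBasis ℤ_[p] N
  set fam : Fin n → (ℚ_[p] ⊗[ℤ_[p]] X) := fun i => ι ((bN i : X)) with hfam
  have hfam_mem : ∀ i, fam i ∈ E := fun i => (hmemN _).1 (bN i).2
  have hfam_indep : LinearIndependent ℚ_[p] fam := by
    have h1 : LinearIndependent ℤ_[p] fam :=
      (bN.linearIndependent).map' (ι.comp N.subtype)
        (LinearMap.ker_eq_bot.mpr (hinj.comp N.injective_subtype))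
    exact h1.localization ℚ_[p] (nonZeroDivisors ℤ_[p])
  have hfam_span : Submodule.span ℚ_[p] (Set.range fam) = E := by
    apply le_antisymm
    · rw [Submodule.span_le]
      rintro _ ⟨i, rfl⟩
      exact hfam_mem i
    · intro v hv
      obtain ⟨d, x, hd, hdv⟩ := hclear v
      have hdne : algebraMap ℤ_[p] ℚ_[p] d ≠ 0 := fun h => hd (halg (by simpa using h))
      have hxN : x ∈ N := by
        rw [hmemN, ← hdv]
        exact E.smul_mem _ hv
      have hxspan : ι x ∈ Submodule.span ℚ_[p] (Set.range fam) := by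
        have h1 : (⟨x, hxN⟩ : N) ∈ Submodule.span ℤ_[p] (Set.range bN) := by
          rw [bN.span_eq]; trivial
        have h3 := Submodule.mem_map_of_mem (f := ι.comp N.subtype) h1
        rw [Submodule.map_span, ← Set.range_comp] at h3
        exact Submodule.span_subset_span ℤ_[p] ℚ_[p] _ h3
      have hveq : v = (algebraMap ℤ_[p] ℚ_[p] d)⁻¹ • ι x := by
        rw [← hdv, smul_smul, inv_mul_cancel₀ hdne, one_smul]
      rw [hveq]
      exact Submodule.smul_mem _ _ hxspan
  have hnb : n = b := by
    have h1 := finrank_span_eq_card hfam_indep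
    rw [hfam_span, hb, Fintype.card_fin] at h1
    exact h1.symm
  let bN' : Module.Basis (Fin b) ℤ_[p] N := bN.reindex (finCongr hnb)
  refine ⟨fun i => (bN' i : X), ?_, ?_⟩
  · intro i
    obtain ⟨m, hm⟩ := hu
    have hmem : ι ((bN' i : X)) ∈ E := (hmemN _).1 (bN' i).2
    have h1 : LinearMap.baseChange ℚ_[p] φ (ι ((bN' i : X)))
        = (u : ℚ_[p]) • ι ((bN' i : X)) := Module.End.mem_eigenspace_iff.mp hmem
    have hx : ι (φ ((bN' i : X))) = ι ((u : ℤ_[p]) • ((bN' i : X))) := by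
      calc ι (φ ((bN' i : X)))
          = LinearMap.baseChange ℚ_[p] φ (ι ((bN' i : X))) := by
            rw [ι_apply, ι_apply, LinearMap.baseChange_tmul]
        _ = (u : ℚ_[p]) • ι ((bN' i : X)) := h1
        _ = ι ((u : ℤ_[p]) • ((bN' i : X))) := by
            rw [map_smul, ← algebraMap_smul ℚ_[p] ((u : ℤ_[p])) (ι ((bN' i : X))),
              map_intCast]
    have h2 : φ ((bN' i : X)) = (u : ℤ_[p]) • ((bN' i : X)) := hinj hx
    refine ⟨(m : ℤ_[p]) • ((bN' i : X)), ?_⟩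
    rw [h2, smul_smul]
    congr 1
    rw [show (u : ℤ_[p]) = (((p : ℤ) ^ a * m : ℤ) : ℤ_[p]) by rw [← hm]]
    push_cast
    ring
  · rintro c ⟨y, hy⟩ i
    have hyN : y ∈ N := by
      rw [hmemN]
      have hsum : (∑ j, c j • ((bN' j : X))) ∈ N :=
        Submodule.sum_mem _ fun j _ => N.smul_mem _ (bN' j).2
      rw [hy, hmemN] at hsum
      have hpne : (algebraMap ℤ_[p] ℚ_[p] ((p : ℤ_[p]))) ≠ 0 := by
        simpa using (Nat.cast_ne_zero (R := ℚ_[p])).mpr (Fact.out : p.Prime).ne_zero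
      rw [map_smul, ← algebraMap_smul ℚ_[p] ((p : ℤ_[p])) (ι y)] at hsum
      exact (E.smul_mem_iff hpne).mp hsum
    have hEq : (∑ j, c j • bN' j) = (p : ℤ_[p]) • (⟨y, hyN⟩ : N) := by
      apply Subtype.ext
      simpa using hy
    have hfin := congrArg (fun z => bN'.repr z i) hEq
    simp only [map_smul, Finsupp.smul_apply, smul_eq_mul] at hfin
    rw [congrFun (bN'.repr_sum_self c) i] at hfin
    exact ⟨_, hfin⟩
end
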